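/- arXiv:1304.2994 — 9 statements merged into one kernel-verified Lean document; each statement's English description precedes it below -/
import Mathlib

section
/- Suppose OMD is run with regularizers f_1,…,f_T defined on a common convex domain S ⊆ ℝ^d, where each f_t is β_t-strongly convex with respect to a norm ‖·‖_t whose dual norm is ‖·‖_{*,t}, on an arbitrary input sequence z_1,…,z_T ∈ ℝ^d, producing θ_1 = 0, w_t = ∇f_t*(θ_t), θ_{t+1} = θ_t + z_t. Then for every u ∈ S: Σ_{t=1}^T ⟨z_t, u − w_t⟩ ≤ f_T(u) + Σ_{t=1}^T ( ‖z_t‖_{*,t}²/(2β_t) + f_t*(θ_t) − f_{t−1}*(θ_t) ), where by convention f_0*(θ_1) = f_0*(0) = 0. -/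
open Finset Matrix
open scoped BigOperators

noncomputable section

/-- `N` is a norm on `ℝ^d`. -/
def IsNorm {d : ℕ} (N : (Fin d → ℝ) → ℝ) : Prop :=
  (∀ x, N x = 0 ↔ x = 0) ∧ (∀ (c : ℝ) (x), N (c • x) = |c| * N x) ∧
    (∀ x y, N (x + y) ≤ N x + N y)

/-- Dual norm `‖θ‖_* = sup {⟨u,θ⟩ : ‖u‖ ≤ 1}`. -/
def dualNorm {d : ℕ} (N : (Fin d → ℝ) → ℝ) (θ : Fin d → ℝ) : ℝ :=
  sSup {r | ∃ u, N u ≤ 1 ∧ r = u ⬝ᵥ θ}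

/-- `g` is a subgradient of `f` at `u` relative to the domain `S`. -/
def IsSubgradAt {d : ℕ} (S : Set (Fin d → ℝ)) (f : (Fin d → ℝ) → ℝ)
    (g u : Fin d → ℝ) : Prop :=
  ∀ v ∈ S, f v ≥ f u + g ⬝ᵥ (v - u)

/-- `f` is `β`-strongly convex on `S` with respect to the norm `N`. -/
def StrongConvexOnWith {d : ℕ} (S : Set (Fin d → ℝ)) (β : ℝ)
    (N : (Fin d → ℝ) → ℝ) (f : (Fin d → ℝ) → ℝ) : Prop :=
  ∀ u ∈ S, ∀ v ∈ S, ∀ g, IsSubgradAt S f g u →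
    f v ≥ f u + g ⬝ᵥ (v - u) + β / 2 * (N (u - v)) ^ 2

/-- Fenchel conjugate of `f` with domain `S`: `f*(θ) = sup_{v∈S} (⟨v,θ⟩ - f v)`. -/
def fenchel {d : ℕ} (S : Set (Fin d → ℝ)) (f : (Fin d → ℝ) → ℝ)
    (θ : Fin d → ℝ) : ℝ :=
  sSup {r | ∃ v ∈ S, r = v ⬝ᵥ θ - f v}

/- ### Auxiliary lemmas about abstract norms on `ℝ^d` -/

namespace OMDAux

variable {d : ℕ} {N : (Fin d → ℝ) → ℝ}

lemma norm_zero (hN : IsNorm N) : N 0 = 0 := (hN.1 0).mpr rfl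

lemma norm_neg (hN : IsNorm N) (x : Fin d → ℝ) : N (-x) = N x := by
  have := hN.2.1 (-1) x
  simpa using this

lemma norm_nonneg' (hN : IsNorm N) (x : Fin d → ℝ) : 0 ≤ N x := by
  have h1 := hN.2.2 x (-x)
  have h2 := norm_neg hN x
  have h0 : N (x + -x) = 0 := by simpa using norm_zero hN
  linarith [h1, h0 ▸ h1]

lemma norm_pos (hN : IsNorm N) {x : Fin d → ℝ} (hx : x ≠ 0) : 0 < N x := by
  rcases lt_or_eq_of_le (norm_nonneg' hN x) with h | h
  · exact h
  · exact absurd ((hN.1 x).mp h.symm) hx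

lemma norm_sum_le (hN : IsNorm N) {ι : Type*} (s : Finset ι) (g : ι → Fin d → ℝ) :
    N (∑ i ∈ s, g i) ≤ ∑ i ∈ s, N (g i) := by
  classical
  induction s using Finset.induction_on with
  | empty => simp [norm_zero hN]
  | insert a s h ih =>
      rw [Finset.sum_insert h, Finset.sum_insert h]
      exact le_trans (hN.2.2 _ _) (by linarith)

/-- Upper bound: `N x ≤ C ‖x‖` for the sup norm. -/
lemma norm_le_const_mul (hN : IsNorm N) :
    ∃ C : ℝ, 0 ≤ C ∧ ∀ x, N x ≤ C * ‖x‖ := by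
  classical
  set e : Fin d → (Fin d → ℝ) := fun i j => if i = j then 1 else 0 with he
  refine ⟨∑ i : Fin d, N (e i),
    Finset.sum_nonneg fun i _ => norm_nonneg' hN _, fun x => ?_⟩
  have hx : x = ∑ i : Fin d, x i • e i := by
    funext j
    simp [e, Finset.sum_apply, mul_ite, Finset.sum_ite_eq]
  calc N x = N (∑ i : Fin d, x i • e i) := by rw [← hx]
    _ ≤ ∑ i : Fin d, N (x i • e i) := norm_sum_le hN _ _
    _ ≤ ∑ i : Fin d, ‖x‖ * N (e i) := by
        refine Finset.sum_le_sum fun i _ => ?_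
        rw [hN.2.1]
        exact mul_le_mul_of_nonneg_right
          (le_trans (le_of_eq (Real.norm_eq_abs _).symm) (norm_le_pi_norm x i))
          (norm_nonneg' hN _)
    _ = (∑ i : Fin d, N (e i)) * ‖x‖ := by rw [← Finset.mul_sum, mul_comm]

lemma norm_continuous (hN : IsNorm N) : Continuous N := by
  obtain ⟨C, hC0, hC⟩ := norm_le_const_mul hN
  have hlip : LipschitzWith (Real.toNNReal C) N := by
    refine LipschitzWith.of_dist_le_mul fun x y => ?_
    have h1 : N x ≤ N y + N (x - y) := by
      have := hN.2.2 (x - y) y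
      simp only [sub_add_cancel] at this
      linarith
    have h2 : N y ≤ N x + N (x - y) := by
      have := hN.2.2 (y - x) x
      have hxy : N (y - x) = N (x - y) := by
        rw [← norm_neg hN (y - x), neg_sub]
      simp only [sub_add_cancel, hxy] at this
      linarith
    have habs : |N x - N y| ≤ N (x - y) := abs_sub_le_iff.mpr ⟨by linarith, by linarith⟩
    have : dist (N x) (N y) ≤ N (x - y) := by rwa [Real.dist_eq]
    refine le_trans this (le_trans (hC _) ?_)
    rw [Real.coe_toNNReal C hC0, dist_eq_norm]
  exact hlip.continuous

/-- Lower bound: `c ‖x‖ ≤ N x` for some `c > 0`. -/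
lemma const_mul_le_norm (hN : IsNorm N) :
    ∃ c : ℝ, 0 < c ∧ ∀ x, c * ‖x‖ ≤ N x := by
  rcases Nat.eq_zero_or_pos d with hd | hd
  · refine ⟨1, one_pos, fun x => ?_⟩
    have hx : x = 0 := by subst hd; ext i; exact absurd i.2 (by omega)
    simp [hx, norm_zero hN]
  · have hne : (Metric.sphere (0 : Fin d → ℝ) 1).Nonempty := by
      refine ⟨Pi.single ⟨0, hd⟩ 1, ?_⟩
      simp [Pi.norm_single]
    obtain ⟨x0, hx0, hmin⟩ := (isCompact_sphere (0 : Fin d → ℝ) 1).exists_isMinOn hne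
      (norm_continuous hN).continuousOn
    have hx0n : ‖x0‖ = 1 := by simpa using hx0
    have hx0ne : x0 ≠ 0 := by
      intro h; rw [h] at hx0n; simp at hx0n
    refine ⟨N x0, norm_pos hN hx0ne, fun x => ?_⟩
    rcases eq_or_ne x 0 with rfl | hx
    · simp [norm_zero hN]
    · have hxn : (0:ℝ) < ‖x‖ := norm_pos_iff.mpr hx
      have hmem : ‖x‖⁻¹ • x ∈ Metric.sphere (0 : Fin d → ℝ) 1 := by
        simp [norm_smul, abs_of_pos (inv_pos.mpr hxn), inv_mul_cancel₀ hxn.ne']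
      have hNsm : N (‖x‖⁻¹ • x) = ‖x‖⁻¹ * N x := by
        rw [hN.2.1, abs_of_pos (inv_pos.mpr hxn)]
      have hmin' : N x0 ≤ ‖x‖⁻¹ * N x := hNsm ▸ hmin hmem
      have h2 : N x0 * ‖x‖ ≤ ‖x‖⁻¹ * N x * ‖x‖ :=
        mul_le_mul_of_nonneg_right hmin' hxn.le
      calc N x0 * ‖x‖ ≤ ‖x‖⁻¹ * N x * ‖x‖ := h2
        _ = N x := by field_simp
-- (note: `hmin hmem : N x0 ≤ N (‖x‖⁻¹ • x)` since `IsMinOn`)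

lemma dotProduct_le_mul_norm (x z : Fin d → ℝ) : x ⬝ᵥ z ≤ (d : ℝ) * ‖x‖ * ‖z‖ := by
  calc x ⬝ᵥ z = ∑ i : Fin d, x i * z i := rfl
    _ ≤ ∑ i : Fin d, ‖x‖ * ‖z‖ := by
        refine Finset.sum_le_sum fun i _ => ?_
        calc x i * z i ≤ |x i * z i| := le_abs_self _
          _ = |x i| * |z i| := abs_mul _ _
          _ ≤ ‖x‖ * ‖z‖ := by
              refine mul_le_mul ?_ ?_ (abs_nonneg _) (norm_nonneg _)
              · exact le_trans (le_of_eq (Real.norm_eq_abs _).symm) (norm_le_pi_norm x i)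
              · exact le_trans (le_of_eq (Real.norm_eq_abs _).symm) (norm_le_pi_norm z i)
    _ = (d : ℝ) * ‖x‖ * ‖z‖ := by
        rw [Finset.sum_const, Finset.card_univ, Fintype.card_fin, nsmul_eq_mul, mul_assoc]

lemma dual_bddAbove (hN : IsNorm N) (z : Fin d → ℝ) :
    BddAbove {r | ∃ u, N u ≤ 1 ∧ r = u ⬝ᵥ z} := by
  obtain ⟨c, hc, hcl⟩ := const_mul_le_norm hN
  refine ⟨(d : ℝ) * c⁻¹ * ‖z‖, fun r hr => ?_⟩
  obtain ⟨u, hu1, rfl⟩ := hr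
  have hub : ‖u‖ ≤ c⁻¹ := by
    have h1 : c * ‖u‖ ≤ 1 := le_trans (hcl u) hu1
    calc ‖u‖ = c⁻¹ * (c * ‖u‖) := by field_simp
      _ ≤ c⁻¹ * 1 := mul_le_mul_of_nonneg_left h1 (inv_pos.mpr hc).le
      _ = c⁻¹ := mul_one _
  calc u ⬝ᵥ z ≤ (d : ℝ) * ‖u‖ * ‖z‖ := dotProduct_le_mul_norm u z
    _ ≤ (d : ℝ) * c⁻¹ * ‖z‖ := by
        have : (d:ℝ) * ‖u‖ ≤ (d:ℝ) * c⁻¹ :=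
          mul_le_mul_of_nonneg_left hub (Nat.cast_nonneg d)
        exact mul_le_mul_of_nonneg_right this (norm_nonneg _)

lemma dualNorm_nonneg (hN : IsNorm N) (z : Fin d → ℝ) : 0 ≤ dualNorm N z := by
  refine le_csSup (dual_bddAbove hN z) ⟨0, ?_, ?_⟩
  · simp [norm_zero hN]
  · rw [zero_dotProduct]

/-- Generalized Cauchy–Schwarz for the pair (N, dualNorm N). -/
lemma pairing_le (hN : IsNorm N) (x z : Fin d → ℝ) :
    x ⬝ᵥ z ≤ N x * dualNorm N z := by
  rcases eq_or_ne x 0 with rfl | hx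
  · simp [zero_dotProduct, norm_zero hN]
  · have ha : 0 < N x := norm_pos hN hx
    have hmem : ((N x)⁻¹ • x) ⬝ᵥ z ∈ {r | ∃ u, N u ≤ 1 ∧ r = u ⬝ᵥ z} := by
      refine ⟨(N x)⁻¹ • x, ?_, rfl⟩
      rw [hN.2.1, abs_of_pos (inv_pos.mpr ha), inv_mul_cancel₀ ha.ne']
    have hle : ((N x)⁻¹ • x) ⬝ᵥ z ≤ dualNorm N z := le_csSup (dual_bddAbove hN z) hmem
    have hsm : ((N x)⁻¹ • x) ⬝ᵥ z = (N x)⁻¹ * (x ⬝ᵥ z) := smul_dotProduct _ _ _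
    rw [hsm] at hle
    calc x ⬝ᵥ z = N x * ((N x)⁻¹ * (x ⬝ᵥ z)) := by field_simp
      _ ≤ N x * dualNorm N z := mul_le_mul_of_nonneg_left hle ha.le

lemma amgm {β a D : ℝ} (hβ : 0 < β) : a * D - β / 2 * a ^ 2 ≤ D ^ 2 / (2 * β) := by
  rw [le_div_iff₀ (by positivity)]
  nlinarith [sq_nonneg (D - β * a)]

lemma sum_dotProduct' {ι : Type*} (s : Finset ι) (z : ι → Fin d → ℝ) (u : Fin d → ℝ) :
    (∑ t ∈ s, z t) ⬝ᵥ u = ∑ t ∈ s, z t ⬝ᵥ u := by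
  classical
  induction s using Finset.induction_on with
  | empty => simp [zero_dotProduct]
  | insert a s h ih =>
      rw [Finset.sum_insert h, Finset.sum_insert h, add_dotProduct, ih]

lemma telescope (G : ℕ → ℝ) (T : ℕ) :
    ∑ t ∈ Finset.Icc 1 T, (G t - G (t - 1)) = G T - G 0 := by
  induction T with
  | zero => simp
  | succ k ih =>
      rw [Finset.sum_Icc_succ_top (Nat.succ_le_succ (Nat.zero_le k)), ih,
        Nat.succ_sub_one]
      ring

end OMDAux

open OMDAux

/-- Lemma 1, first part: the fundamental regret inequality for
Online Mirror Descent with time-varying regularizers.  Here `w t` is encoded as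
`∇f_t*(θ_t)`, i.e. the maximizer over `S` of `v ↦ ⟨v, θ_t⟩ - f_t v`, and the
convention `f_0* (0) = 0` is realized by `f 0 = 0` (so that
`fenchel S (f 0) (θ 1) = 0` since `θ 1 = 0` and `S` is nonempty). -/
theorem stmt_0 {d T : ℕ}
    (S : Set (Fin d → ℝ)) (hS : Convex ℝ S) (hSne : S.Nonempty)
    (f : ℕ → (Fin d → ℝ) → ℝ) (hf0 : ∀ v, f 0 v = 0)
    (β : ℕ → ℝ) (hβ : ∀ t ∈ Icc 1 T, 0 < β t)
    (N : ℕ → (Fin d → ℝ) → ℝ) (hN : ∀ t ∈ Icc 1 T, IsNorm (N t))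
    (hstrong : ∀ t ∈ Icc 1 T, StrongConvexOnWith S (β t) (N t) (f t))
    (z θ w : ℕ → Fin d → ℝ)
    (hθ1 : θ 1 = 0)
    (hθ : ∀ t ∈ Icc 1 T, θ (t + 1) = θ t + z t)
    (hwmem : ∀ t ∈ Icc 1 T, w t ∈ S)
    (hwmax : ∀ t ∈ Icc 1 T, ∀ v ∈ S,
      v ⬝ᵥ θ t - f t v ≤ w t ⬝ᵥ θ t - f t (w t)) :
    ∀ u ∈ S,
      ∑ t ∈ Icc 1 T, z t ⬝ᵥ (u - w t) ≤
        f T u + ∑ t ∈ Icc 1 T,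
          (dualNorm (N t) (z t) ^ 2 / (2 * β t)
            + fenchel S (f t) (θ t) - fenchel S (f (t - 1)) (θ t)) := by
  intro u hu
  rcases Nat.eq_zero_or_pos T with hT0 | hT1
  · subst hT0
    simp [hf0]
  have hTm : T ∈ Icc 1 T := mem_Icc.mpr ⟨hT1, le_refl T⟩
  -- θ t is a subgradient of f t at w t
  have hsub : ∀ t ∈ Icc 1 T, ∀ v ∈ S, f t v ≥ f t (w t) + θ t ⬝ᵥ (v - w t) := by
    intro t ht v hv
    have h := hwmax t ht v hv
    have e3 : θ t ⬝ᵥ (v - w t) = v ⬝ᵥ θ t - w t ⬝ᵥ θ t := by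
      rw [dotProduct_sub, dotProduct_comm, dotProduct_comm (θ t) (w t)]
    rw [e3]
    linarith
  have hstrongw : ∀ t ∈ Icc 1 T, ∀ v ∈ S,
      f t v ≥ f t (w t) + θ t ⬝ᵥ (v - w t) + β t / 2 * (N t (w t - v)) ^ 2 :=
    fun t ht v hv => hstrong t ht (w t) (hwmem t ht) v hv (θ t)
      (fun v' hv' => hsub t ht v' hv')
  -- pointwise upper bound at the shifted dual point
  have hub : ∀ t ∈ Icc 1 T, ∀ v ∈ S,
      v ⬝ᵥ (θ t + z t) - f t v ≤
        (w t ⬝ᵥ θ t - f t (w t)) + z t ⬝ᵥ w t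
          + dualNorm (N t) (z t) ^ 2 / (2 * β t) := by
    intro t ht v hv
    have hsc := hstrongw t ht v hv
    have hpair : (v - w t) ⬝ᵥ z t ≤ N t (v - w t) * dualNorm (N t) (z t) :=
      pairing_le (hN t ht) _ _
    have hNsym : N t (w t - v) = N t (v - w t) := by
      rw [← norm_neg (hN t ht) (w t - v), neg_sub]
    have hamgm : N t (v - w t) * dualNorm (N t) (z t)
        - β t / 2 * (N t (v - w t)) ^ 2
        ≤ dualNorm (N t) (z t) ^ 2 / (2 * β t) := amgm (hβ t ht)
    have e1 : v ⬝ᵥ (θ t + z t) = v ⬝ᵥ θ t + v ⬝ᵥ z t := dotProduct_add _ _ _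
    have e2 : (v - w t) ⬝ᵥ z t = v ⬝ᵥ z t - w t ⬝ᵥ z t := sub_dotProduct _ _ _
    have e3 : θ t ⬝ᵥ (v - w t) = v ⬝ᵥ θ t - w t ⬝ᵥ θ t := by
      rw [dotProduct_sub, dotProduct_comm, dotProduct_comm (θ t) (w t)]
    have e4 : z t ⬝ᵥ w t = w t ⬝ᵥ z t := dotProduct_comm _ _
    rw [hNsym] at hsc
    linarith
  -- value of the conjugate at θ t
  have hFt : ∀ t ∈ Icc 1 T, fenchel S (f t) (θ t) = w t ⬝ᵥ θ t - f t (w t) := by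
    intro t ht
    apply le_antisymm
    · refine csSup_le ⟨w t ⬝ᵥ θ t - f t (w t), w t, hwmem t ht, rfl⟩ ?_
      rintro r ⟨v, hv, rfl⟩
      exact hwmax t ht v hv
    · refine le_csSup ⟨w t ⬝ᵥ θ t - f t (w t), ?_⟩ ⟨w t, hwmem t ht, rfl⟩
      rintro r ⟨v, hv, rfl⟩
      exact hwmax t ht v hv
  -- one-step inequality
  have hstep : ∀ t ∈ Icc 1 T, fenchel S (f t) (θ (t + 1)) ≤
      fenchel S (f t) (θ t) + z t ⬝ᵥ w t
        + dualNorm (N t) (z t) ^ 2 / (2 * β t) := by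
    intro t ht
    rw [hθ t ht, hFt t ht]
    refine csSup_le ⟨w t ⬝ᵥ (θ t + z t) - f t (w t), w t, hwmem t ht, rfl⟩ ?_
    rintro r ⟨v, hv, rfl⟩
    exact hub t ht v hv
  -- Fenchel–Young at time T
  have hFY : u ⬝ᵥ θ (T + 1) - f T u ≤ fenchel S (f T) (θ (T + 1)) := by
    refine le_csSup ⟨(w T ⬝ᵥ θ T - f T (w T)) + z T ⬝ᵥ w T
      + dualNorm (N T) (z T) ^ 2 / (2 * β T), ?_⟩ ⟨u, hu, rfl⟩
    rintro r ⟨v, hv, rfl⟩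
    rw [hθ T hTm]
    exact hub T hTm v hv
  -- θ (n+1) is the partial sum of the z's
  have hθsum : ∀ n, n ≤ T → θ (n + 1) = ∑ t ∈ Icc 1 n, z t := by
    intro n
    induction n with
    | zero => intro _; simpa using hθ1
    | succ k ih =>
        intro hk
        have hk' : k ≤ T := le_trans (Nat.le_succ k) hk
        rw [hθ (k + 1) (mem_Icc.mpr ⟨Nat.succ_le_succ (Nat.zero_le k), hk⟩),
          ih hk', Finset.sum_Icc_succ_top (Nat.succ_le_succ (Nat.zero_le k))]
  -- the conjugate of f 0 at θ 1 vanishes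
  have hG0 : fenchel S (f 0) (θ 1) = 0 := by
    rw [hθ1]
    have hset : {r | ∃ v ∈ S, r = v ⬝ᵥ (0 : Fin d → ℝ) - f 0 v} = {0} := by
      ext r
      simp only [Set.mem_setOf_eq, Set.mem_singleton_iff, dotProduct_zero, hf0]
      constructor
      · rintro ⟨v, hv, rfl⟩; ring
      · rintro rfl; exact ⟨hSne.choose, hSne.choose_spec, by ring⟩
    rw [fenchel, hset, csSup_singleton]
  -- telescoping identity
  have htel : fenchel S (f T) (θ (T + 1)) =
      ∑ t ∈ Icc 1 T, (fenchel S (f t) (θ (t + 1)) - fenchel S (f (t - 1)) (θ t)) := by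
    have h1 : ∀ t ∈ Icc 1 T,
        fenchel S (f t) (θ (t + 1)) - fenchel S (f (t - 1)) (θ t) =
          (fun n => fenchel S (f n) (θ (n + 1))) t
            - (fun n => fenchel S (f n) (θ (n + 1))) (t - 1) := by
      intro t ht
      have ht1 : 1 ≤ t := (mem_Icc.mp ht).1
      have h : t - 1 + 1 = t := Nat.succ_pred_eq_of_pos ht1
      simp only [h]
    rw [Finset.sum_congr rfl h1, telescope (fun n => fenchel S (f n) (θ (n + 1))) T]
    simp only [hG0]
    ring
  calc ∑ t ∈ Icc 1 T, z t ⬝ᵥ (u - w t)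
      = ∑ t ∈ Icc 1 T, (z t ⬝ᵥ u - z t ⬝ᵥ w t) :=
        Finset.sum_congr rfl fun t _ => dotProduct_sub _ _ _
    _ = (∑ t ∈ Icc 1 T, z t ⬝ᵥ u) - ∑ t ∈ Icc 1 T, z t ⬝ᵥ w t :=
        Finset.sum_sub_distrib _ _
    _ = u ⬝ᵥ θ (T + 1) - ∑ t ∈ Icc 1 T, z t ⬝ᵥ w t := by
        have h : (∑ t ∈ Icc 1 T, z t ⬝ᵥ u) = u ⬝ᵥ θ (T + 1) := by
          rw [hθsum T le_rfl, dotProduct_comm u, sum_dotProduct']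
        rw [h]
    _ ≤ fenchel S (f T) (θ (T + 1)) + f T u - ∑ t ∈ Icc 1 T, z t ⬝ᵥ w t := by
        linarith
    _ = f T u + ∑ t ∈ Icc 1 T,
          (fenchel S (f t) (θ (t + 1)) - fenchel S (f (t - 1)) (θ t) - z t ⬝ᵥ w t) := by
        rw [Finset.sum_sub_distrib, ← htel]
        ring
    _ ≤ f T u + ∑ t ∈ Icc 1 T,
          (dualNorm (N t) (z t) ^ 2 / (2 * β t)
            + fenchel S (f t) (θ t) - fenchel S (f (t - 1)) (θ t)) := by
        refine add_le_add le_rfl (Finset.sum_le_sum fun t ht => ?_)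
        have := hstep t ht
        linarith
end
end

section
/- Let a_1,…,a_d > 0 and q ∈ (1,2], and define f : ℝ^d → ℝ by f(w) = (1/(2(q−1))) · (Σ_{i=1}^d |w_i|^q a_i)^{2/q}. Then the Fenchel conjugate of f is f*(θ) = (1/(2(p−1))) · (Σ_{i=1}^d |θ_i|^p a_i^{1−p})^{2/p}, where p = q/(q−1). -/
open Finset Matrix
open scoped BigOperators

noncomputable section

private lemma quad_aux (w u m : ℝ) (hw : 0 < w) : u*m - 1/(2*w)*u^2 ≤ w/2*m^2 := by
  have h : w/2*m^2 - (u*m - 1/(2*w)*u^2) = (1/(2*w))*(u - w*m)^2 := by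
    field_simp; ring
  nlinarith [mul_nonneg (by positivity : (0:ℝ) ≤ 1/(2*w)) (sq_nonneg (u - w*m))]

/-- Lemma 2, first part: the Fenchel conjugate of the weighted
squared-`q`-norm regularizer `f(w) = (1/(2(q-1))) (Σ_i |w_i|^q a_i)^{2/q}` is
`f*(θ) = (1/(2(p-1))) (Σ_i |θ_i|^p a_i^{1-p})^{2/p}` with `p = q/(q-1)`.
The conjugate value is expressed as the least upper bound of
`{⟨v,θ⟩ - f(v) : v ∈ ℝ^d}`. -/
theorem stmt_5 {d : ℕ} (a : Fin d → ℝ) (ha : ∀ i, 0 < a i)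
    (q p : ℝ) (hq1 : 1 < q) (hq2 : q ≤ 2) (hp : p = q / (q - 1))
    (f : (Fin d → ℝ) → ℝ)
    (hf : ∀ w, f w = 1 / (2 * (q - 1)) * (∑ i, |w i| ^ q * a i) ^ (2 / q)) :
    ∀ θ : Fin d → ℝ,
      IsLUB {r | ∃ v : Fin d → ℝ, r = v ⬝ᵥ θ - f v}
        (1 / (2 * (p - 1)) * (∑ i, |θ i| ^ p * a i ^ (1 - p)) ^ (2 / p)) := by
  intro θ
  have hq0 : (0:ℝ) < q := lt_trans one_pos hq1
  have hqm : (0:ℝ) < q - 1 := sub_pos.2 hq1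
  have hpq : q.HolderConjugate p := (Real.holderConjugate_iff_eq_conjExponent hq1).2 hp
  have hp1 : 1 < p := (Real.holderConjugate_iff.1 (Real.HolderConjugate.symm hpq)).1
  have hp0 : (0:ℝ) < p := lt_trans one_pos hp1
  have hpm1 : (p - 1) * q = p := Real.HolderConjugate.sub_one_mul_conj (Real.HolderConjugate.symm hpq)
  have h2c : 1 / (2 * (p - 1)) = (q - 1) / 2 := by
    rw [hp]; field_simp; ring
  set T := ∑ i, |θ i| ^ p * a i ^ (1 - p) with hTdef
  have hTnn : 0 ≤ T :=
    Finset.sum_nonneg fun i _ => mul_nonneg (Real.rpow_nonneg (abs_nonneg _) _)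
      (Real.rpow_nonneg (ha i).le _)
  -- upper bound
  have hub : ∀ v : Fin d → ℝ, v ⬝ᵥ θ - f v ≤ (q - 1) / 2 * T ^ ((2:ℝ) / p) := by
    intro v
    set X := ∑ i, |v i| ^ q * a i with hXdef
    have hXnn : 0 ≤ X :=
      Finset.sum_nonneg fun i _ => mul_nonneg (Real.rpow_nonneg (abs_nonneg _) _) (ha i).le
    have hholder : v ⬝ᵥ θ ≤ X ^ ((1:ℝ)/q) * T ^ ((1:ℝ)/p) := by
      have H := Real.inner_le_Lp_mul_Lq Finset.univ
        (fun i => v i * a i ^ ((1:ℝ)/q)) (fun i => θ i * a i ^ (-(1/q))) hpq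
      have e3 : ∀ i : Fin d, (v i * a i ^ ((1:ℝ)/q)) * (θ i * a i ^ (-(1/q))) = v i * θ i := by
        intro i
        rw [mul_mul_mul_comm, ← Real.rpow_add (ha i)]
        simp
      have e1 : ∀ i : Fin d, |v i * a i ^ ((1:ℝ)/q)| ^ q = |v i| ^ q * a i := by
        intro i
        rw [abs_mul, abs_of_pos (Real.rpow_pos_of_pos (ha i) _),
          Real.mul_rpow (abs_nonneg _) (Real.rpow_pos_of_pos (ha i) _).le]
        congr 1
        rw [← Real.rpow_mul (ha i).le, one_div, inv_mul_cancel₀ hq0.ne', Real.rpow_one]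
      have e2 : ∀ i : Fin d, |θ i * a i ^ (-(1/q))| ^ p = |θ i| ^ p * a i ^ (1 - p) := by
        intro i
        rw [abs_mul, abs_of_pos (Real.rpow_pos_of_pos (ha i) _),
          Real.mul_rpow (abs_nonneg _) (Real.rpow_pos_of_pos (ha i) _).le,
          ← Real.rpow_mul (ha i).le]
        congr 1
        have : -(1/q) * p = 1 - p := by
          have hdiv : p / q = p - 1 := Real.HolderConjugate.div_conj_eq_sub_one (Real.HolderConjugate.symm hpq)
          rw [neg_mul, one_div, inv_mul_eq_div, hdiv]; ring
        rw [this]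
      simp only [e1, e2, e3] at H
      simpa [dotProduct, hXdef, hTdef] using H
    have hX2 : X ^ ((2:ℝ)/q) = (X ^ ((1:ℝ)/q)) ^ 2 := by
      rw [← Real.rpow_two, ← Real.rpow_mul hXnn]
      norm_num
      ring_nf
    have hT2 : T ^ ((2:ℝ)/p) = (T ^ ((1:ℝ)/p)) ^ 2 := by
      rw [← Real.rpow_two, ← Real.rpow_mul hTnn]
      norm_num
      ring_nf
    rw [hf v, ← hXdef, hX2, hT2]
    calc v ⬝ᵥ θ - 1 / (2 * (q-1)) * (X ^ ((1:ℝ)/q)) ^ 2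
        ≤ X ^ ((1:ℝ)/q) * T ^ ((1:ℝ)/p) - 1 / (2 * (q-1)) * (X ^ ((1:ℝ)/q)) ^ 2 := by
          linarith
      _ ≤ (q - 1) / 2 * (T ^ ((1:ℝ)/p)) ^ 2 := quad_aux (q-1) _ _ hqm
  rw [h2c]
  refine IsGreatest.isLUB ⟨?_, ?_⟩
  · -- membership: the sup is attained
    by_cases hT : T = 0
    · refine ⟨0, ?_⟩
      have hzz : (∑ i, |(0 : Fin d → ℝ) i| ^ q * a i) = 0 := by
        simp [Real.zero_rpow hq0.ne']
      rw [hf 0, hzz, hT, Real.zero_rpow (by positivity : (2:ℝ)/q ≠ 0),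
        Real.zero_rpow (by positivity : (2:ℝ)/p ≠ 0)]
      simp [dotProduct]
    · have hTpos : 0 < T := lt_of_le_of_ne hTnn (Ne.symm hT)
      set s : ℝ := (q - 1) * T ^ ((2 - p)/p) with hsdef
      have hspos : 0 < s := mul_pos hqm (Real.rpow_pos_of_pos hTpos _)
      set v : Fin d → ℝ := fun i => s * Real.sign (θ i) * |θ i| ^ (p - 1) * a i ^ (1 - p)
        with hvdef
      have claimA : ∀ i : Fin d, v i * θ i = s * (|θ i| ^ p * a i ^ (1 - p)) := by
        intro i
        by_cases h0 : θ i = 0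
        · simp [hvdef, h0, Real.zero_rpow hp0.ne']
        · have habs : 0 < |θ i| := abs_pos.2 h0
          have hsign : Real.sign (θ i) * θ i = |θ i| := by
            rcases lt_or_gt_of_ne h0 with hlt | hlt
            · rw [Real.sign_of_neg hlt, abs_of_neg hlt]; ring
            · rw [Real.sign_of_pos hlt, abs_of_pos hlt]; ring
          have hpow : |θ i| * |θ i| ^ (p - 1) = |θ i| ^ p := by
            nth_rewrite 1 [← Real.rpow_one |θ i|]
            rw [← Real.rpow_add habs]; ring_nf
          calc v i * θ i = (Real.sign (θ i) * θ i) * (|θ i| ^ (p-1)) * a i ^ (1-p) * s := by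
                rw [hvdef]; ring
            _ = s * (|θ i| ^ p * a i ^ (1 - p)) := by rw [hsign, hpow]; ring
      have claimB : ∀ i : Fin d, |v i| ^ q * a i = s ^ q * (|θ i| ^ p * a i ^ (1 - p)) := by
        intro i
        by_cases h0 : θ i = 0
        · simp [hvdef, h0, Real.zero_rpow hq0.ne', Real.zero_rpow hp0.ne']
        · have habs : 0 < |θ i| := abs_pos.2 h0
          have hsign : |Real.sign (θ i)| = 1 := by
            rcases lt_or_gt_of_ne h0 with hlt | hlt
            · rw [Real.sign_of_neg hlt]; norm_num
            · rw [Real.sign_of_pos hlt]; norm_num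
          have hva : |v i| = s * |θ i| ^ (p - 1) * a i ^ (1 - p) := by
            rw [hvdef]
            simp only [abs_mul, hsign, abs_of_pos hspos,
              abs_of_pos (Real.rpow_pos_of_pos habs _),
              abs_of_pos (Real.rpow_pos_of_pos (ha i) _)]
            ring
          rw [hva, Real.mul_rpow (by positivity) (Real.rpow_pos_of_pos (ha i) _).le,
            Real.mul_rpow hspos.le (Real.rpow_pos_of_pos habs _).le,
            ← Real.rpow_mul habs.le, ← Real.rpow_mul (ha i).le, hpm1]
          have hae : a i ^ ((1 - p) * q) * a i = a i ^ (1 - p) := by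
            nth_rewrite 2 [← Real.rpow_one (a i)]
            rw [← Real.rpow_add (ha i)]
            congr 1
            linear_combination -hpm1
          rw [mul_assoc, mul_assoc, hae]
      have sumA : v ⬝ᵥ θ = s * T := by
        simp only [dotProduct, claimA, hTdef, ← Finset.mul_sum]
      have sumB : ∑ i, |v i| ^ q * a i = s ^ q * T := by
        simp only [claimB, hTdef, ← Finset.mul_sum]
      refine ⟨v, ?_⟩
      rw [hf v, sumB, sumA]
      have h1 : (s ^ q * T) ^ ((2:ℝ)/q) = s ^ (2:ℝ) * T ^ ((2:ℝ)/q) := by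
        rw [Real.mul_rpow (Real.rpow_pos_of_pos hspos _).le hTnn,
          ← Real.rpow_mul hspos.le, mul_div_cancel₀ _ hq0.ne']
      rw [h1, hsdef]
      have h2 : ((q-1) * T ^ ((2 - p)/p)) ^ (2:ℝ) = (q-1)^2 * T ^ ((2-p)/p*2) := by
        rw [Real.mul_rpow hqm.le (Real.rpow_pos_of_pos hTpos _).le,
          ← Real.rpow_mul hTpos.le, Real.rpow_two]
      rw [h2]
      have h3 : T ^ ((2-p)/p) * T = T ^ ((2:ℝ)/p) := by
        nth_rewrite 2 [← Real.rpow_one T]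
        rw [← Real.rpow_add hTpos]
        congr 1
        field_simp; ring
      have h4 : T ^ ((2-p)/p*2) * T ^ ((2:ℝ)/q) = T ^ ((2:ℝ)/p) := by
        rw [← Real.rpow_add hTpos]
        congr 1
        rw [hp]; field_simp; ring
      have lhs_eq : (q - 1) * T ^ ((2 - p) / p) * T -
          1 / (2 * (q - 1)) * ((q - 1) ^ 2 * T ^ ((2 - p) / p * 2) * T ^ ((2:ℝ) / q))
          = (q - 1) / 2 * T ^ ((2:ℝ) / p) := by
        rw [mul_assoc, h3, mul_assoc ((q-1)^2), h4]
        field_simp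
        ring
      linarith [lhs_eq]
  · rintro r ⟨v, rfl⟩
    exact hub v
end
end

section
/- Let a_1,…,a_d > 0 and q ∈ (1,2], and define f : ℝ^d → ℝ by f(w) = (1/(2(q−1))) · (Σ_{i=1}^d |w_i|^q a_i)^{2/q}. Then f is 1-strongly convex with respect to the weighted q-norm ‖x‖ = (Σ_{i=1}^d |x_i|^q a_i)^{1/q}; that is, for all u,v ∈ ℝ^d and every subgradient g of f at u, f(v) ≥ f(u) + ⟨g, v−u⟩ + (1/2)‖u−v‖². -/
open Finset Matrix Filter
open scoped BigOperators Topology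

noncomputable section

private lemma sq_rpow_half (x r : ℝ) : ((x ^ 2 : ℝ)) ^ (r / 2) = |x| ^ r := by
  calc (x ^ 2 : ℝ) ^ (r / 2) = (|x| ^ (2 : ℕ)) ^ (r / 2) := by rw [sq_abs]
    _ = (|x| ^ ((2 : ℕ) : ℝ)) ^ (r / 2) := by rw [Real.rpow_natCast]
    _ = |x| ^ (((2 : ℕ) : ℝ) * (r / 2)) := by rw [← Real.rpow_mul (abs_nonneg x)]
    _ = |x| ^ r := by congr 1; push_cast; ring

private lemma deriv1 {ε q : ℝ} (hε : 0 < ε) (y : ℝ) :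
    HasDerivAt (fun z : ℝ => (z ^ 2 + ε) ^ (q / 2)) (q * y * (y ^ 2 + ε) ^ (q / 2 - 1)) y := by
  have h1 : HasDerivAt (fun z : ℝ => z ^ 2 + ε) (2 * y) y := by
    simpa using (hasDerivAt_pow 2 y).add_const ε
  have h2 := Real.hasDerivAt_rpow_const (x := y ^ 2 + ε) (p := q / 2)
    (Or.inl (by positivity))
  have h3 := h2.comp y h1
  refine h3.congr_deriv ?_
  ring

private lemma deriv2 {ε q : ℝ} (hε : 0 < ε) (y : ℝ) :
    HasDerivAt (fun z : ℝ => q * z * ((z ^ 2 + ε) ^ (q / 2 - 1)))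
      (q * ((q - 1) * y ^ 2 + ε) * (y ^ 2 + ε) ^ (q / 2 - 2)) y := by
  have h1 : HasDerivAt (fun z : ℝ => q * z) q y := by
    simpa using (hasDerivAt_id y).const_mul q
  have h2 : HasDerivAt (fun z : ℝ => (z ^ 2 + ε) ^ (q / 2 - 1))
      ((q / 2 - 1) * (y ^ 2 + ε) ^ (q / 2 - 2) * (2 * y)) y := by
    have ha : HasDerivAt (fun z : ℝ => z ^ 2 + ε) (2 * y) y := by
      simpa using (hasDerivAt_pow 2 y).add_const ε
    have hb := Real.hasDerivAt_rpow_const (x := y ^ 2 + ε) (p := q / 2 - 1)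
      (Or.inl (by positivity))
    have hc := hb.comp y ha
    refine hc.congr_deriv ?_
    ring
  have h3 := h1.mul h2
  refine h3.congr_deriv ?_
  have hpos : (0 : ℝ) < y ^ 2 + ε := by positivity
  rw [show q / 2 - 1 = (q / 2 - 2) + 1 by ring, Real.rpow_add_one hpos.ne']
  ring

private lemma holder_aux {d : ℕ} (a : Fin d → ℝ) (ha : ∀ i, 0 < a i) {q : ℝ}
    (hq1 : 1 < q) (hq2 : q ≤ 2) (w e : Fin d → ℝ) {ε : ℝ} (hε : 0 < ε) :
    (∑ i, |e i| ^ q * a i) ^ (2 / q) ≤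
      (∑ i, (e i) ^ 2 * ((w i) ^ 2 + ε) ^ (q / 2 - 1) * a i) *
        (∑ i, ((w i) ^ 2 + ε) ^ (q / 2) * a i) ^ (2 / q - 1) := by
  have hq0 : (0 : ℝ) < q := by linarith
  rcases eq_or_lt_of_le hq2 with rfl | hq2'
  · have e1 : ∀ x : ℝ, |x| ^ (2 : ℝ) = x ^ 2 := fun x => by
      rw [show |x| ^ (2:ℝ) = |x| ^ ((2:ℕ):ℝ) by norm_num, Real.rpow_natCast, sq_abs]
    simp only [show (2:ℝ)/2 - 1 = 0 by norm_num, show (2:ℝ)/2 = 1 by norm_num,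
      Real.rpow_zero, Real.rpow_one, e1, mul_one]
    norm_num
  · -- 1 < q < 2
    set F : Fin d → ℝ := fun i => ((e i) ^ 2 * ((w i) ^ 2 + ε) ^ (q / 2 - 1) * a i) ^ (q / 2)
      with hF
    set G : Fin d → ℝ := fun i => (((w i) ^ 2 + ε) ^ (q / 2) * a i) ^ ((2 - q) / 2) with hG
    have hpq : Real.HolderConjugate (2 / q) (2 / (2 - q)) := by
      rw [Real.holderConjugate_iff]; constructor
      · rw [lt_div_iff₀ hq0]; linarith
      · rw [show ((2:ℝ)/q)⁻¹ = q/2 by field_simp, show ((2:ℝ)/(2-q))⁻¹ = (2-q)/2 by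
          rw [inv_div]]
        ring
    have hZ : ∀ i, (0:ℝ) < (w i) ^ 2 + ε := fun i => by positivity
    have hFnn : ∀ i, 0 ≤ (e i) ^ 2 * ((w i) ^ 2 + ε) ^ (q / 2 - 1) * a i := fun i => by
      have := (ha i).le; positivity
    have key := Real.inner_le_Lp_mul_Lq (s := Finset.univ) F G hpq
    have hFG : ∀ i, F i * G i = |e i| ^ q * a i := by
      intro i
      rw [hF, hG]
      simp only
      rw [Real.mul_rpow (by positivity) (ha i).le,
        Real.mul_rpow (by positivity) (Real.rpow_nonneg (hZ i).le _),
        Real.mul_rpow (Real.rpow_nonneg (hZ i).le _) (ha i).le,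
        sq_rpow_half, ← Real.rpow_mul (hZ i).le, ← Real.rpow_mul (hZ i).le]
      calc |e i| ^ q * (w i ^ 2 + ε) ^ ((q / 2 - 1) * (q / 2)) * a i ^ (q / 2) *
            ((w i ^ 2 + ε) ^ (q / 2 * ((2 - q) / 2)) * a i ^ ((2 - q) / 2))
          = |e i| ^ q * ((w i ^ 2 + ε) ^ ((q / 2 - 1) * (q / 2)) *
              (w i ^ 2 + ε) ^ (q / 2 * ((2 - q) / 2))) *
              (a i ^ (q / 2) * a i ^ ((2 - q) / 2)) := by ring
        _ = |e i| ^ q * a i := by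
            rw [← Real.rpow_add (hZ i), ← Real.rpow_add (ha i),
              show (q / 2 - 1) * (q / 2) + q / 2 * ((2 - q) / 2) = 0 by ring,
              show q / 2 + (2 - q) / 2 = 1 by ring, Real.rpow_zero, Real.rpow_one,
              mul_one]
    have hF2 : ∀ i, |F i| ^ (2 / q) = (e i) ^ 2 * ((w i) ^ 2 + ε) ^ (q / 2 - 1) * a i := by
      intro i
      rw [abs_of_nonneg (Real.rpow_nonneg (hFnn i) _)]
      rw [← Real.rpow_mul (hFnn i), show q / 2 * (2 / q) = 1 by field_simp, Real.rpow_one]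
    have hG2 : ∀ i, |G i| ^ (2 / (2 - q)) = ((w i) ^ 2 + ε) ^ (q / 2) * a i := by
      intro i
      have hGnn : (0:ℝ) ≤ ((w i) ^ 2 + ε) ^ (q / 2) * a i :=
        mul_nonneg (Real.rpow_nonneg (hZ i).le _) (ha i).le
      rw [abs_of_nonneg (Real.rpow_nonneg hGnn _)]
      have hne : (2:ℝ) - q ≠ 0 := sub_ne_zero.mpr (ne_of_lt hq2').symm
      rw [← Real.rpow_mul hGnn, show (2 - q) / 2 * (2 / (2 - q)) = 1 by
        field_simp, Real.rpow_one]
    simp only [hFG, hF2, hG2, one_div_div] at key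
    have hXnn : (0:ℝ) ≤ ∑ i, (e i) ^ 2 * ((w i) ^ 2 + ε) ^ (q / 2 - 1) * a i :=
      Finset.sum_nonneg fun i _ => hFnn i
    have hYnn : (0:ℝ) ≤ ∑ i, ((w i) ^ 2 + ε) ^ (q / 2) * a i :=
      Finset.sum_nonneg fun i _ => mul_nonneg (Real.rpow_nonneg (hZ i).le _) (ha i).le
    have h2q : (0:ℝ) ≤ 2 / q := by positivity
    have := Real.rpow_le_rpow
      (Finset.sum_nonneg fun i _ => mul_nonneg (Real.rpow_nonneg (abs_nonneg _) _) (ha i).le)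
      key h2q
    rwa [Real.mul_rpow (Real.rpow_nonneg hXnn _) (Real.rpow_nonneg hYnn _),
      ← Real.rpow_mul hXnn, ← Real.rpow_mul hYnn,
      show q / 2 * (2 / q) = 1 by field_simp,
      show (2 - q) / 2 * (2 / q) = 2 / q - 1 by field_simp,
      Real.rpow_one] at this

private lemma convexOn_of_hasDerivAt2 {f f' f'' : ℝ → ℝ}
    (h1 : ∀ x, HasDerivAt f (f' x) x) (h2 : ∀ x, HasDerivAt f' (f'' x) x)
    (h3 : ∀ x, 0 ≤ f'' x) : ConvexOn ℝ Set.univ f := by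
  have e1 : deriv f = f' := funext fun x => (h1 x).deriv
  apply convexOn_of_deriv2_nonneg' convex_univ
  · exact fun x _ => (h1 x).differentiableAt.differentiableWithinAt
  · rw [e1]; exact fun x _ => (h2 x).differentiableAt.differentiableWithinAt
  · intro x _
    have e2 : deriv^[2] f x = deriv (deriv f) x := by
      rw [Function.iterate_succ_apply', Function.iterate_one]
    rw [e2, e1, (h2 x).deriv]
    exact h3 x

private lemma eps_convex {d : ℕ} (hd : 0 < d) (a : Fin d → ℝ) (ha : ∀ i, 0 < a i) {q : ℝ}
    (hq1 : 1 < q) (hq2 : q ≤ 2) (u e : Fin d → ℝ) {ε : ℝ} (hε : 0 < ε) :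
    ConvexOn ℝ Set.univ (fun x : ℝ =>
      1 / (2 * (q - 1)) * (∑ i, ((u i + x * e i) ^ 2 + ε) ^ (q / 2) * a i) ^ (2 / q)
        - (∑ i, |e i| ^ q * a i) ^ (2 / q) / 2 * x ^ 2) := by
  haveI : Nonempty (Fin d) := Fin.pos_iff_nonempty.mp hd
  have hq0 : (0 : ℝ) < q := by linarith
  have hq1' : (0 : ℝ) < q - 1 := by linarith
  set c : ℝ := (∑ i, |e i| ^ q * a i) ^ (2 / q) with hc
  set C : ℝ := 1 / (2 * (q - 1)) with hC
  have hCpos : 0 < C := by rw [hC]; positivity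
  set M : ℝ → ℝ := fun x => ∑ i, ((u i + x * e i) ^ 2 + ε) ^ (q / 2) * a i with hM
  set M' : ℝ → ℝ := fun x =>
    ∑ i, q * (u i + x * e i) * (((u i + x * e i) ^ 2 + ε) ^ (q / 2 - 1)) * e i * a i with hM'
  set M'' : ℝ → ℝ := fun x =>
    ∑ i, q * ((q - 1) * (u i + x * e i) ^ 2 + ε) * ((u i + x * e i) ^ 2 + ε) ^ (q / 2 - 2)
      * e i * e i * a i with hM''
  have hZ : ∀ (x : ℝ) (i : Fin d), (0:ℝ) < (u i + x * e i) ^ 2 + ε := fun x i => by positivity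
  have hMpos : ∀ x, 0 < M x := fun x =>
    Finset.sum_pos (fun i _ => mul_pos (Real.rpow_pos_of_pos (hZ x i) _) (ha i))
      Finset.univ_nonempty
  have hW : ∀ (i : Fin d) (x : ℝ), HasDerivAt (fun x : ℝ => u i + x * e i) (e i) x :=
    fun i x => by simpa using ((hasDerivAt_id x).mul_const (e i)).const_add (u i)
  have hMd : ∀ x, HasDerivAt M (M' x) x := by
    intro x
    apply HasDerivAt.fun_sum
    intro i _
    have h1 : HasDerivAt (fun x : ℝ => ((u i + x * e i) ^ 2 + ε) ^ (q / 2))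
        (q * (u i + x * e i) * ((u i + x * e i) ^ 2 + ε) ^ (q / 2 - 1) * e i) x :=
      by have := (deriv1 (q := q) hε (u i + x * e i)).comp x (hW i x); exact this
    exact h1.mul_const (a i)
  have hM'd : ∀ x, HasDerivAt M' (M'' x) x := by
    intro x
    apply HasDerivAt.fun_sum
    intro i _
    have h1 : HasDerivAt (fun x : ℝ => q * (u i + x * e i) * (((u i + x * e i) ^ 2 + ε) ^ (q / 2 - 1)))
        (q * ((q - 1) * (u i + x * e i) ^ 2 + ε) * ((u i + x * e i) ^ 2 + ε) ^ (q / 2 - 2) * e i) x :=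
      by have := (deriv2 (q := q) hε (u i + x * e i)).comp x (hW i x); exact this
    exact (h1.mul_const (e i)).mul_const (a i)
  -- first derivative of the main function
  set φ' : ℝ → ℝ := fun x => C * (2 / q * M x ^ (2 / q - 1) * M' x) - c / 2 * (2 * x) with hφ'
  have hKd : ∀ x, HasDerivAt (fun x : ℝ => C * M x ^ (2 / q) - c / 2 * x ^ 2) (φ' x) x := by
    intro x
    have h1 : HasDerivAt (fun x : ℝ => M x ^ (2 / q)) (2 / q * M x ^ (2 / q - 1) * M' x) x :=
      (Real.hasDerivAt_rpow_const (x := M x) (p := 2 / q) (Or.inl (hMpos x).ne')).comp x (hMd x)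
    have h2 : HasDerivAt (fun x : ℝ => x ^ 2) (2 * x) x := by simpa using hasDerivAt_pow 2 x
    exact (h1.const_mul C).sub (h2.const_mul (c / 2))
  set φ'' : ℝ → ℝ := fun x =>
    C * ((2 / q - 1) * M x ^ (2 / q - 2) * M' x * (2 / q) * M' x + 2 / q * M x ^ (2 / q - 1) * M'' x)
      - c with hφ''
  have hK'd : ∀ x, HasDerivAt φ' (φ'' x) x := by
    intro x
    have h1 : HasDerivAt (fun x : ℝ => M x ^ (2 / q - 1))
        ((2 / q - 1) * M x ^ (2 / q - 1 - 1) * M' x) x :=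
      (Real.hasDerivAt_rpow_const (x := M x) (p := 2 / q - 1) (Or.inl (hMpos x).ne')).comp x (hMd x)
    have h2 := ((h1.const_mul (2 / q)).mul (hM'd x)).const_mul C
    have h3 : HasDerivAt (fun x : ℝ => c / 2 * (2 * x)) c x := by
      simpa using ((hasDerivAt_id x).const_mul (2:ℝ)).const_mul (c / 2)
    have h4 := h2.sub h3
    refine h4.congr_deriv ?_
    rw [hφ'', show 2 / q - 1 - 1 = 2 / q - 2 by ring]
    ring
  apply convexOn_of_hasDerivAt2 hKd hK'd
  intro x
  rw [hφ'']
  -- second derivative lower bound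
  have hA : ∀ x, (0:ℝ) ≤ ∑ i, (e i) ^ 2 * ((u i + x * e i) ^ 2 + ε) ^ (q / 2 - 1) * a i :=
    fun x => Finset.sum_nonneg fun i _ => by
      have := (ha i).le
      positivity
  have hM''ge : q * (q - 1) * (∑ i, (e i) ^ 2 * ((u i + x * e i) ^ 2 + ε) ^ (q / 2 - 1) * a i)
      ≤ M'' x := by
    rw [hM'', Finset.mul_sum]
    apply Finset.sum_le_sum
    intro i _
    have hz := hZ x i
    have e1 : ((u i + x * e i) ^ 2 + ε) ^ (q / 2 - 1)
        = ((u i + x * e i) ^ 2 + ε) ^ (q / 2 - 2) * ((u i + x * e i) ^ 2 + ε) := by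
      rw [← Real.rpow_add_one hz.ne' (q / 2 - 2)]
      congr 1
      ring
    rw [e1]
    have hrn : (0:ℝ) ≤ ((u i + x * e i) ^ 2 + ε) ^ (q / 2 - 2) := Real.rpow_nonneg hz.le _
    have base : q * (q - 1) * ((u i + x * e i) ^ 2 + ε) ≤ q * ((q - 1) * (u i + x * e i) ^ 2 + ε) := by
      nlinarith [mul_nonneg (mul_nonneg hq0.le (sub_nonneg.mpr hq2)) hε.le]
    calc q * (q - 1) * ((e i) ^ 2 * (((u i + x * e i) ^ 2 + ε) ^ (q / 2 - 2) * ((u i + x * e i) ^ 2 + ε)) * a i)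
        = (q * (q - 1) * ((u i + x * e i) ^ 2 + ε)) * (((u i + x * e i) ^ 2 + ε) ^ (q / 2 - 2) * (e i) ^ 2 * a i) := by ring
      _ ≤ (q * ((q - 1) * (u i + x * e i) ^ 2 + ε)) * (((u i + x * e i) ^ 2 + ε) ^ (q / 2 - 2) * (e i) ^ 2 * a i) := by
          apply mul_le_mul_of_nonneg_right base
          have := (ha i).le
          positivity
      _ = q * ((q - 1) * (u i + x * e i) ^ 2 + ε) * ((u i + x * e i) ^ 2 + ε) ^ (q / 2 - 2) * e i * e i * a i := by ring
  have hkey : c ≤ (∑ i, (e i) ^ 2 * ((u i + x * e i) ^ 2 + ε) ^ (q / 2 - 1) * a i) * M x ^ (2 / q - 1) :=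
    holder_aux a ha hq1 hq2 (fun i => u i + x * e i) e hε
  have hterm1 : 0 ≤ C * ((2 / q - 1) * M x ^ (2 / q - 2) * M' x * (2 / q) * M' x) := by
    have h1 : (0:ℝ) ≤ 2 / q - 1 := by
      rw [sub_nonneg, le_div_iff₀ hq0]; linarith
    have h2 : (0:ℝ) ≤ M x ^ (2 / q - 2) := Real.rpow_nonneg (hMpos x).le _
    have h3 : (0:ℝ) ≤ M' x * M' x := mul_self_nonneg _
    have h4 : (0:ℝ) ≤ 2 / q := by positivity
    calc (0:ℝ) ≤ C * ((2 / q - 1) * M x ^ (2 / q - 2) * (2 / q) * (M' x * M' x)) := by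
          apply mul_nonneg hCpos.le
          apply mul_nonneg (mul_nonneg (mul_nonneg h1 h2) h4) h3
      _ = C * ((2 / q - 1) * M x ^ (2 / q - 2) * M' x * (2 / q) * M' x) := by ring
  have hterm2 : c ≤ C * (2 / q * M x ^ (2 / q - 1) * M'' x) := by
    have hMnn : (0:ℝ) ≤ M x ^ (2 / q - 1) := Real.rpow_nonneg (hMpos x).le _
    have step : C * (2 / q * M x ^ (2 / q - 1) * (q * (q - 1) *
        (∑ i, (e i) ^ 2 * ((u i + x * e i) ^ 2 + ε) ^ (q / 2 - 1) * a i)))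
        ≤ C * (2 / q * M x ^ (2 / q - 1) * M'' x) := by
      apply mul_le_mul_of_nonneg_left _ hCpos.le
      apply mul_le_mul_of_nonneg_left hM''ge
      positivity
    refine le_trans ?_ step
    have eC : C * (2 / q) * (q * (q - 1)) = 1 := by
      rw [hC]; field_simp
    calc c ≤ (∑ i, (e i) ^ 2 * ((u i + x * e i) ^ 2 + ε) ^ (q / 2 - 1) * a i) * M x ^ (2 / q - 1) := hkey
      _ = C * (2 / q) * (q * (q - 1)) * ((∑ i, (e i) ^ 2 * ((u i + x * e i) ^ 2 + ε) ^ (q / 2 - 1) * a i) * M x ^ (2 / q - 1)) := by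
          rw [eC, one_mul]
      _ = C * (2 / q * M x ^ (2 / q - 1) * (q * (q - 1) *
          (∑ i, (e i) ^ 2 * ((u i + x * e i) ^ 2 + ε) ^ (q / 2 - 1) * a i))) := by ring
  have expand : C * ((2 / q - 1) * M x ^ (2 / q - 2) * M' x * (2 / q) * M' x + 2 / q * M x ^ (2 / q - 1) * M'' x)
      = C * ((2 / q - 1) * M x ^ (2 / q - 2) * M' x * (2 / q) * M' x) + C * (2 / q * M x ^ (2 / q - 1) * M'' x) := by
    ring
  rw [sub_nonneg, expand]
  linarith

private lemma tendsto_phi {d : ℕ} (a : Fin d → ℝ) {q : ℝ} (hq0 : 0 < q) (u e : Fin d → ℝ)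
    (x : ℝ) :
    Tendsto (fun ε : ℝ => 1 / (2 * (q - 1)) * (∑ i, ((u i + x * e i) ^ 2 + ε) ^ (q / 2) * a i) ^ (2 / q))
      (𝓝[>] 0) (𝓝 (1 / (2 * (q - 1)) * (∑ i, |u i + x * e i| ^ q * a i) ^ (2 / q))) := by
  have hsum : Tendsto (fun ε : ℝ => ∑ i, ((u i + x * e i) ^ 2 + ε) ^ (q / 2) * a i)
      (𝓝[>] 0) (𝓝 (∑ i, |u i + x * e i| ^ q * a i)) := by
    apply tendsto_finset_sum
    intro i _
    have t1 : Tendsto (fun ε : ℝ => (u i + x * e i) ^ 2 + ε) (𝓝[>] 0)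
        (𝓝 ((u i + x * e i) ^ 2)) := by
      have h0 : Tendsto (fun ε : ℝ => (u i + x * e i) ^ 2 + ε) (𝓝 0)
          (𝓝 ((u i + x * e i) ^ 2 + 0)) := (continuous_const.add continuous_id).tendsto 0
      simpa using h0.mono_left nhdsWithin_le_nhds
    have t2 : ContinuousAt (fun z : ℝ => z ^ (q / 2)) ((u i + x * e i) ^ 2) :=
      Real.continuousAt_rpow_const _ _ (Or.inr (by positivity))
    have t3 := (t2.tendsto.comp t1).mul_const (a i)
    rw [sq_rpow_half] at t3
    exact t3
  have t4 : ContinuousAt (fun z : ℝ => z ^ (2 / q)) (∑ i, |u i + x * e i| ^ q * a i) :=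
    Real.continuousAt_rpow_const _ _ (Or.inr (by positivity))
  exact (t4.tendsto.comp hsum).const_mul _

/-- Lemma 2, second part: the weighted squared-`q`-norm regularizer
`f(w) = (1/(2(q-1))) (Σ_i |w_i|^q a_i)^{2/q}` is `1`-strongly convex with respect to
the weighted `q`-norm `‖x‖ = (Σ_i |x_i|^q a_i)^{1/q}`: for all `u, v` and every
subgradient `g` of `f` at `u`, `f(v) ≥ f(u) + ⟨g, v-u⟩ + (1/2)‖u-v‖²`. -/
theorem stmt_6 {d : ℕ} (a : Fin d → ℝ) (ha : ∀ i, 0 < a i)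
    (q : ℝ) (hq1 : 1 < q) (hq2 : q ≤ 2)
    (f : (Fin d → ℝ) → ℝ)
    (hf : ∀ w, f w = 1 / (2 * (q - 1)) * (∑ i, |w i| ^ q * a i) ^ (2 / q)) :
    ∀ u v g : Fin d → ℝ,
      (∀ z, f z ≥ f u + g ⬝ᵥ (z - u)) →
      f v ≥ f u + g ⬝ᵥ (v - u) +
        1 / 2 * ((∑ i, |u i - v i| ^ q * a i) ^ ((1 : ℝ) / q)) ^ 2 := by
  intro u v g hsub
  have hq0 : (0 : ℝ) < q := by linarith
  rcases Nat.eq_zero_or_pos d with hd0 | hd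
  · subst hd0
    have h2q : (2 : ℝ) / q ≠ 0 := by positivity
    have h1q : (1 : ℝ) / q ≠ 0 := by positivity
    simp [hf, dotProduct, Real.zero_rpow h2q, Real.zero_rpow h1q]
    rw [Real.zero_rpow (show (q : ℝ)⁻¹ ≠ 0 by positivity)]
    norm_num
  · set e : Fin d → ℝ := fun i => v i - u i with he
    set c : ℝ := (∑ i, |e i| ^ q * a i) ^ (2 / q) with hc
    set s : ℝ := g ⬝ᵥ (v - u) with hs
    set φ : ℝ → ℝ := fun x => 1 / (2 * (q - 1)) * (∑ i, |u i + x * e i| ^ q * a i) ^ (2 / q)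
      with hφ
    have hφf : ∀ x : ℝ, φ x = f (u + x • (v - u)) := by
      intro x
      rw [hφ, hf]
      simp [he]
    have main_t : ∀ t : ℝ, 0 < t → t ≤ 1 →
        φ t - c / 2 * t ^ 2 ≤ (1 - t) * φ 0 + t * (φ 1 - c / 2) := by
      intro t ht0 ht1
      have appconv : ∀ ε ∈ Set.Ioi (0 : ℝ),
          (fun ε : ℝ => 1 / (2 * (q - 1)) * (∑ i, ((u i + t * e i) ^ 2 + ε) ^ (q / 2) * a i) ^ (2 / q)) ε
            - c / 2 * t ^ 2 ≤
          (1 - t) * (fun ε : ℝ => 1 / (2 * (q - 1)) * (∑ i, ((u i + 0 * e i) ^ 2 + ε) ^ (q / 2) * a i) ^ (2 / q)) ε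
            + t * ((fun ε : ℝ => 1 / (2 * (q - 1)) * (∑ i, ((u i + 1 * e i) ^ 2 + ε) ^ (q / 2) * a i) ^ (2 / q)) ε - c / 2) := by
        intro ε hε
        have hcv := eps_convex hd a ha hq1 hq2 u e (Set.mem_Ioi.mp hε)
        have h2 := hcv.2 (Set.mem_univ (0 : ℝ)) (Set.mem_univ (1 : ℝ))
          (by linarith : (0:ℝ) ≤ 1 - t) ht0.le (by ring)
        simp only [smul_eq_mul, mul_zero, mul_one, zero_add] at h2
        norm_num at h2 ⊢
        linarith
      have lim0 := tendsto_phi a hq0 u e 0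
      have lim1 := tendsto_phi a hq0 u e 1
      have limt := tendsto_phi a hq0 u e t
      have limF := (((lim0.const_mul (1 - t)).add ((lim1.sub_const (c / 2)).const_mul t)).sub
        (limt.sub_const (c / 2 * t ^ 2)))
      have h0 : 0 ≤ (1 - t) * φ 0 + t * (φ 1 - c / 2) - (φ t - c / 2 * t ^ 2) := by
        refine ge_of_tendsto limF ?_
        refine eventually_nhdsWithin_of_forall ?_
        intro ε hε
        have := appconv ε hε
        simp only at this ⊢
        linarith
      linarith
    have hstep : ∀ t : ℝ, 0 < t → t ≤ 1 → s + c / 2 - c / 2 * t ≤ f v - f u := by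
      intro t ht0 ht1
      have h1 : f u + t * s ≤ φ t := by
        have h2 := hsub (u + t • (v - u))
        rw [← hφf t] at h2
        have h3 : u + t • (v - u) - u = t • (v - u) := add_sub_cancel_left u _
        rw [h3, dotProduct_smul, smul_eq_mul, ← hs] at h2
        linarith
      have h0 : φ 0 = f u := by rw [hφf 0]; congr 1; simp
      have h4 : φ 1 = f v := by rw [hφf 1]; congr 1; simp
      have h5 := main_t t ht0 ht1
      rw [h0, h4] at h5
      have h6 : t * (s + c / 2 - c / 2 * t) ≤ t * (f v - f u) := by nlinarith
      exact le_of_mul_le_mul_left h6 ht0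
    have hlim : Tendsto (fun n : ℕ => s + c / 2 - c / 2 * (1 / ((n : ℝ) + 1))) atTop
        (𝓝 (s + c / 2)) := by
      have h1 := tendsto_one_div_add_atTop_nhds_zero_nat (𝕜 := ℝ)
      have h2 := (h1.const_mul (c / 2)).const_sub (s + c / 2)
      simpa using h2
    have hfin : s + c / 2 ≤ f v - f u := by
      refine le_of_tendsto hlim (Eventually.of_forall fun n => ?_)
      have hn0 : (0:ℝ) < 1 / ((n : ℝ) + 1) := by positivity
      have hn1 : 1 / ((n : ℝ) + 1) ≤ 1 := by
        rw [div_le_one (by positivity)]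
        linarith [Nat.cast_nonneg (α := ℝ) n]
      exact hstep _ hn0 hn1
    have hcgoal : 1 / 2 * ((∑ i, |u i - v i| ^ q * a i) ^ ((1 : ℝ) / q)) ^ 2 = c / 2 := by
      have habs : ∀ i : Fin d, |u i - v i| = |e i| := fun i => by rw [he]; exact abs_sub_comm _ _
      have hXnn : (0 : ℝ) ≤ ∑ i, |e i| ^ q * a i :=
        Finset.sum_nonneg fun i _ => mul_nonneg (Real.rpow_nonneg (abs_nonneg _) _) (ha i).le
      simp only [habs]
      rw [← Real.rpow_natCast ((∑ i, |e i| ^ q * a i) ^ ((1 : ℝ) / q)) 2,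
        ← Real.rpow_mul hXnn, hc, show (1 : ℝ) / q * ((2 : ℕ) : ℝ) = 2 / q by push_cast; ring]
      ring
    rw [hcgoal]
    linarith
end
end

section
/- Fix L > 0, η > 0, and a loss ℓ : ℝ×ℝ → ℝ such that ℓ(·,y) is convex and L-Lipschitz for every y ∈ ℝ. Let (x_1,y_1),…,(x_T,y_T) ∈ ℝ^d×ℝ be examples and set b_{t,i} = max_{s ≤ t} |x_{s,i}|. Define the algorithm: θ_1 = 0; at step t, set w_{t,j} = θ_{t,j} / ( b_{t,j}² √d · √( L² + Σ_{s=1}^{t−1} (ℓ'_{s,j}/b_{s,j})² ) ) for coordinates j with b_{t,j} > 0 and w_{t,j} = 0 otherwise (with the convention 0/0 = 0 in all ratios ℓ'_{s,j}/b_{s,j}); then θ_{t+1} = θ_t − η ℓ'_t, where ℓ'_t = g_t x_t and g_t is a subderivative of ℓ(·,y_t) at w_tᵀx_t. Then for every u ∈ ℝ^d: Σ_{t=1}^T ℓ(w_tᵀx_t, y_t) − Σ_{t=1}^T ℓ(uᵀx_t, y_t) ≤ L √(d(T+1)) · ( (1/(2η)) Σ_{i=1}^d (u_i b_{T,i})²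 + η ). -/
open Finset Matrix
open scoped BigOperators

noncomputable section

private lemma tele (f : ℕ → ℝ) : ∀ T : ℕ, ∑ t ∈ Icc 1 T, (f t - f (t + 1)) = f 1 - f (T + 1) := by
  intro T
  induction T with
  | zero => simp
  | succ n ih =>
      rw [Finset.sum_Icc_succ_top (Nat.succ_le_succ (Nat.zero_le n)), ih]
      ring


private lemma sum_Icc_pred_add (f : ℕ → ℝ) {m : ℕ} (hm : 1 ≤ m) :
    ∑ s ∈ Icc 1 m, f s = (∑ s ∈ Icc 1 (m - 1), f s) + f m := by
  cases m with
  | zero => omega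
  | succ k => simpa using Finset.sum_Icc_succ_top (Nat.succ_le_succ (Nat.zero_le k)) f


private lemma stepA (C D c : ℝ) (hC : 0 < C) (hD : C ≤ D) (hc0 : 0 ≤ c) (hcC : c ≤ C) :
    c / Real.sqrt D ≤
      (2 * Real.sqrt (D + c) - C / Real.sqrt (D + c)) - (2 * Real.sqrt D - C / Real.sqrt D) := by
  have hD0 : 0 < D := lt_of_lt_of_le hC hD
  set s := Real.sqrt D with hs
  set r := Real.sqrt (D + c) with hr
  have hsp : 0 < s := Real.sqrt_pos.2 hD0
  have hrp : 0 < r := Real.sqrt_pos.2 (by linarith)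
  have hs2 : s ^ 2 = D := Real.sq_sqrt hD0.le
  have hr2 : r ^ 2 = D + c := Real.sq_sqrt (by linarith)
  have hsr : s ≤ r := Real.sqrt_le_sqrt (by linarith)
  have hkey : r * (r - s) ≤ C := by
    have h1 : r * (r - s) * (r + s) ≤ C * (r + s) := by nlinarith [mul_le_mul_of_nonneg_left hcC hrp.le]
    have h2 : (0:ℝ) < r + s := by linarith
    exact le_of_mul_le_mul_right h1 h2
  have hc' : c = r ^ 2 - s ^ 2 := by linarith
  rw [← sub_nonneg]
  have expand : (2 * r - C / r) - (2 * s - C / s) - c / s = ((r - s) * (C - r * (r - s))) / (r * s) := by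
    rw [hc']
    field_simp
    ring
  rw [expand]
  apply div_nonneg
  · exact mul_nonneg (by linarith) (by linarith)
  · positivity

private lemma lemA (T : ℕ) (C : ℝ) (hC : 0 < C) (c : ℕ → ℝ)
    (hc : ∀ t ∈ Icc 1 T, 0 ≤ c t ∧ c t ≤ C) :
    ∑ t ∈ Icc 1 T, c t / Real.sqrt (C + ∑ s ∈ Icc 1 (t - 1), c s)
      ≤ 2 * Real.sqrt (C + ∑ t ∈ Icc 1 T, c t) := by
  have key : ∀ n : ℕ, (∀ t ∈ Icc 1 n, 0 ≤ c t ∧ c t ≤ C) →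
      ∑ t ∈ Icc 1 n, c t / Real.sqrt (C + ∑ s ∈ Icc 1 (t - 1), c s)
        ≤ 2 * Real.sqrt (C + ∑ t ∈ Icc 1 n, c t)
          - C / Real.sqrt (C + ∑ t ∈ Icc 1 n, c t) := by
    intro n
    induction n with
    | zero =>
        intro _
        have h1 : C / Real.sqrt C = Real.sqrt C := Real.div_sqrt
        have h2 : 0 ≤ Real.sqrt C := Real.sqrt_nonneg C
        simp only [show Icc 1 0 = (∅ : Finset ℕ) from rfl, Finset.sum_empty, add_zero]
        linarith
    | succ n ih =>
        intro hcn
        have hsub : ∀ t ∈ Icc 1 n, 0 ≤ c t ∧ c t ≤ C := fun t ht =>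
          hcn t (Finset.mem_Icc.2 ⟨(Finset.mem_Icc.1 ht).1,
            le_trans (Finset.mem_Icc.1 ht).2 (Nat.le_succ n)⟩)
        have hSnonneg : 0 ≤ ∑ t ∈ Icc 1 n, c t :=
          Finset.sum_nonneg fun t ht => (hsub t ht).1
        have hSn : C ≤ C + ∑ t ∈ Icc 1 n, c t := by linarith
        have hc1 := hcn (n + 1) (Finset.mem_Icc.2 ⟨Nat.succ_le_succ (Nat.zero_le n), le_refl _⟩)
        rw [Finset.sum_Icc_succ_top (Nat.succ_le_succ (Nat.zero_le n)),
            Finset.sum_Icc_succ_top (Nat.succ_le_succ (Nat.zero_le n))]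
        simp only [Nat.add_sub_cancel]
        have hstep := stepA C (C + ∑ t ∈ Icc 1 n, c t) (c (n + 1)) hC hSn hc1.1 hc1.2
        have hassoc : C + ∑ t ∈ Icc 1 n, c t + c (n + 1) = C + (∑ t ∈ Icc 1 n, c t + c (n + 1)) := by ring
        rw [hassoc] at hstep
        linarith [ih hsub]
  have h := key T hc
  have h2 : 0 ≤ C / Real.sqrt (C + ∑ t ∈ Icc 1 T, c t) := by positivity
  linarith

set_option maxHeartbeats 1000000 in
private lemma percoord (T : ℕ) (L η sd : ℝ) (hL : 0 < L) (hη : 0 < η) (hsd : 0 < sd)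
    (b h wj Θ H B Φ : ℕ → ℝ) (u : ℝ)
    (hb0 : ∀ t ∈ Icc 1 T, 0 ≤ b t)
    (hbmono : ∀ s t, s ∈ Icc 1 T → t ∈ Icc 1 T → s ≤ t → b s ≤ b t)
    (hhb : ∀ t ∈ Icc 1 T, |h t| ≤ L * b t)
    (hΘ : ∀ t, Θ t = ∑ s ∈ Icc 1 (t - 1), h s)
    (hH : ∀ t, H t = Real.sqrt (L ^ 2 + ∑ s ∈ Icc 1 (t - 1), (h s / b s) ^ 2))
    (hB : ∀ t, B t = b (min t T) ^ 2 * sd * H t)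
    (hΦ : ∀ t, Φ t = η * Θ t ^ 2 / (2 * B t))
    (hwif : ∀ t ∈ Icc 1 T, wj t = if 0 < b t then -η * Θ t / (b t ^ 2 * sd * H t) else 0) :
    ∑ t ∈ Icc 1 T, h t * (wj t - u) ≤
      sd * L * Real.sqrt ((T : ℝ) + 1) * (u * b T) ^ 2 / (2 * η)
        + η * L * Real.sqrt ((T : ℝ) + 1) / sd := by
  -- basic positivity facts
  have hsum0 : ∀ t : ℕ, 0 ≤ ∑ s ∈ Icc 1 (t - 1), (h s / b s) ^ 2 :=
    fun t => Finset.sum_nonneg fun s _ => sq_nonneg _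
  have hHL : ∀ t, L ≤ H t := by
    intro t
    rw [hH]
    calc L = Real.sqrt (L ^ 2) := (Real.sqrt_sq hL.le).symm
    _ ≤ _ := Real.sqrt_le_sqrt (by linarith [hsum0 t])
  have hHpos : ∀ t, 0 < H t := fun t => lt_of_lt_of_le hL (hHL t)
  -- zero-coordinate facts
  have hhzero : ∀ t ∈ Icc 1 T, b t = 0 → h t = 0 := by
    intro t ht hbt
    have h1 := hhb t ht
    rw [hbt, mul_zero] at h1
    exact abs_eq_zero.1 (le_antisymm h1 (abs_nonneg _))
  have hΘzero : ∀ t ∈ Icc 1 T, b t = 0 → Θ t = 0 := by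
    intro t ht hbt
    rw [hΘ]
    apply Finset.sum_eq_zero
    intro s hs
    obtain ⟨hs1, hs2⟩ := Finset.mem_Icc.1 hs
    obtain ⟨ht1, ht2⟩ := Finset.mem_Icc.1 ht
    have hsT : s ∈ Icc 1 T := Finset.mem_Icc.2 ⟨hs1, le_trans hs2 (le_trans (Nat.sub_le t 1) ht2)⟩
    have hbs : b s = 0 := le_antisymm
      (hbt ▸ hbmono s t hsT ht (le_trans hs2 (Nat.sub_le t 1))) (hb0 s hsT)
    exact hhzero s hsT hbs
  -- a_t bound
  have haL : ∀ t ∈ Icc 1 T, (h t / b t) ^ 2 ≤ L ^ 2 := by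
    intro t ht
    rcases (hb0 t ht).lt_or_eq with hbt | hbt
    · have h1 : |h t / b t| ≤ L := by
        rw [abs_div, abs_of_pos hbt, div_le_iff₀ hbt]
        exact hhb t ht
      calc (h t / b t) ^ 2 = |h t / b t| ^ 2 := (sq_abs _).symm
      _ ≤ L ^ 2 := pow_le_pow_left₀ (abs_nonneg _) h1 2
    · rw [← hbt, div_zero]
      simpa using sq_nonneg L
  -- Θ recursion
  have hΘsucc : ∀ t : ℕ, 1 ≤ t → Θ (t + 1) = Θ t + h t := by
    intro t ht1
    cases t with
    | zero => omega
    | succ m =>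
        rw [hΘ, hΘ]
        simp only [Nat.add_sub_cancel, Nat.succ_sub_one]
        exact Finset.sum_Icc_succ_top (Nat.succ_le_succ (Nat.zero_le m)) _
  -- B monotone
  have hBmono : ∀ t ∈ Icc 1 T, B t ≤ B (t + 1) := by
    intro t ht
    obtain ⟨ht1, ht2⟩ := Finset.mem_Icc.1 ht
    have hmt : min t T = t := min_eq_left ht2
    have hbb : b t ≤ b (min (t + 1) T) := by
      rcases le_or_gt (t + 1) T with hc | hc
      · rw [min_eq_left hc]
        exact hbmono t (t + 1) ht (Finset.mem_Icc.2 ⟨by omega, hc⟩) (Nat.le_succ t)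
      · rw [min_eq_right (by omega : T ≤ t + 1)]
        exact hbmono t T ht (Finset.mem_Icc.2 ⟨by omega, le_refl T⟩) ht2
    have hbt0 : 0 ≤ b t := hb0 t ht
    have hHm : H t ≤ H (t + 1) := by
      rw [hH, hH]
      apply Real.sqrt_le_sqrt
      simp only [Nat.add_sub_cancel]
      have hsub : Icc 1 (t - 1) ⊆ Icc 1 t := Finset.Icc_subset_Icc_right (Nat.sub_le t 1)
      have := Finset.sum_le_sum_of_subset_of_nonneg hsub (fun s _ _ => sq_nonneg (h s / b s))
      linarith
    rw [hB, hB, hmt]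
    apply mul_le_mul _ hHm (hHpos t).le
    · exact mul_nonneg (sq_nonneg _) hsd.le
    · exact mul_le_mul_of_nonneg_right (pow_le_pow_left₀ hbt0 hbb 2) hsd.le
  -- per-step inequality
  have step : ∀ t ∈ Icc 1 T,
      h t * wj t ≤ (Φ t - Φ (t + 1)) + η * (h t / b t) ^ 2 / (2 * sd * H t) := by
    intro t ht
    obtain ⟨ht1, ht2⟩ := Finset.mem_Icc.1 ht
    rcases (hb0 t ht).lt_or_eq with hbt | hbt
    · have hmt : min t T = t := min_eq_left ht2
      have hBt : 0 < B t := by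
        rw [hB, hmt]
        exact mul_pos (mul_pos (pow_pos hbt 2) hsd) (hHpos t)
      have hBt' : B t ≤ B (t + 1) := hBmono t ht
      have hBt1 : 0 < B (t + 1) := lt_of_lt_of_le hBt hBt'
      have hwt : wj t = -η * Θ t / B t := by rw [hwif t ht, if_pos hbt, hB, hmt]
      have hΘt1 : Θ (t + 1) = Θ t + h t := hΘsucc t ht1
      have hstab : η * h t ^ 2 / (2 * B t) = η * (h t / b t) ^ 2 / (2 * sd * H t) := by
        rw [hB, hmt]
        field_simp
      rw [hwt, hΦ, hΦ, hΘt1, ← hstab]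
      have h1 : η * (Θ t + h t) ^ 2 / (2 * B (t + 1)) ≤ η * (Θ t + h t) ^ 2 / (2 * B t) := by
        apply div_le_div_of_nonneg_left (by positivity) (by linarith) (by linarith)
      have h2 : h t * (-η * Θ t / B t)
          = η * Θ t ^ 2 / (2 * B t) - η * (Θ t + h t) ^ 2 / (2 * B t) + η * h t ^ 2 / (2 * B t) := by
        field_simp
        ring
      linarith
    · have hbt' : b t = 0 := hbt.symm
      have hh0 : h t = 0 := hhzero t ht hbt'
      have hΘ0 : Θ t = 0 := hΘzero t ht hbt'
      have hΘ10 : Θ (t + 1) = 0 := by rw [hΘsucc t ht1, hΘ0, hh0, add_zero]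
      have hΦ0 : Φ t = 0 := by rw [hΦ, hΘ0]; simp
      have hΦ10 : Φ (t + 1) = 0 := by rw [hΦ, hΘ10]; simp
      rw [hh0, hΦ0, hΦ10]
      simp
  -- sum the per-step inequality
  have hΦ1 : Φ 1 = 0 := by
    rw [hΦ, hΘ]
    simp
  have hΦT1 : 0 ≤ Φ (T + 1) := by
    rw [hΦ]
    apply div_nonneg (by positivity)
    rw [hB]
    have : 0 ≤ b (min (T + 1) T) ^ 2 * sd := mul_nonneg (sq_nonneg _) hsd.le
    nlinarith [hHpos (T + 1)]
  have sum1 : ∑ t ∈ Icc 1 T, h t * wj t ≤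
      (Φ 1 - Φ (T + 1)) + ∑ t ∈ Icc 1 T, η * (h t / b t) ^ 2 / (2 * sd * H t) := by
    calc ∑ t ∈ Icc 1 T, h t * wj t
        ≤ ∑ t ∈ Icc 1 T, ((Φ t - Φ (t + 1)) + η * (h t / b t) ^ 2 / (2 * sd * H t)) :=
          Finset.sum_le_sum step
    _ = (Φ 1 - Φ (T + 1)) + ∑ t ∈ Icc 1 T, η * (h t / b t) ^ 2 / (2 * sd * H t) := by
          rw [Finset.sum_add_distrib, tele Φ T]
  -- split LHS
  have hsplit : ∑ t ∈ Icc 1 T, h t * (wj t - u)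
      = (∑ t ∈ Icc 1 T, h t * wj t) - u * Θ (T + 1) := by
    rw [hΘ]
    simp only [Nat.add_sub_cancel]
    rw [Finset.mul_sum, ← Finset.sum_sub_distrib]
    exact Finset.sum_congr rfl fun t _ => by ring
  -- Young's inequality for the comparator
  have hyoung : -(u * Θ (T + 1)) ≤ Φ (T + 1) + u ^ 2 * B (T + 1) / (2 * η) := by
    have hBnn : 0 ≤ B (T + 1) := by
      rw [hB]
      have : 0 ≤ b (min (T + 1) T) ^ 2 * sd := mul_nonneg (sq_nonneg _) hsd.le
      nlinarith [hHpos (T + 1)]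
    rcases hBnn.lt_or_eq with hB0 | hB0
    · have h1 : η * Θ (T + 1) ^ 2 / (2 * B (T + 1)) + u ^ 2 * B (T + 1) / (2 * η) + u * Θ (T + 1)
          = (η * Θ (T + 1) + B (T + 1) * u) ^ 2 / (2 * η * B (T + 1)) := by
        field_simp
        ring
      have h2 : 0 ≤ (η * Θ (T + 1) + B (T + 1) * u) ^ 2 / (2 * η * B (T + 1)) := by positivity
      rw [hΦ]
      linarith [h1 ▸ h2]
    · -- B (T+1) = 0 : then b T = 0 and Θ (T+1) = 0
      have hbT : b T = 0 := by
        rw [hB, min_eq_right (Nat.le_succ T)] at hB0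
        have hH1 := hHpos (T + 1)
        have : b T ^ 2 = 0 := by
          by_contra hne
          have hpos : 0 < b T ^ 2 := lt_of_le_of_ne (sq_nonneg _) (Ne.symm hne)
          nlinarith [mul_pos (mul_pos hpos hsd) hH1]
        exact pow_eq_zero_iff (by norm_num) |>.1 this
      have hΘT0 : Θ (T + 1) = 0 := by
        rw [hΘ]
        simp only [Nat.add_sub_cancel]
        apply Finset.sum_eq_zero
        intro s hs
        obtain ⟨hs1, hs2⟩ := Finset.mem_Icc.1 hs
        have hsT : s ∈ Icc 1 T := Finset.mem_Icc.2 ⟨hs1, hs2⟩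
        have hTT : T ∈ Icc 1 T := Finset.mem_Icc.2 ⟨le_trans hs1 hs2, le_refl T⟩
        have hbs : b s = 0 := le_antisymm (hbT ▸ hbmono s T hsT hTT hs2) (hb0 s hsT)
        exact hhzero s hsT hbs
      rw [hΘT0, ← hB0]
      simp [hΦT1]
  -- combine
  have main1 : ∑ t ∈ Icc 1 T, h t * (wj t - u) ≤
      u ^ 2 * B (T + 1) / (2 * η) + ∑ t ∈ Icc 1 T, η * (h t / b t) ^ 2 / (2 * sd * H t) := by
    rw [hsplit]
    linarith [sum1, hyoung]
  -- bound the comparator term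
  have hHT : H (T + 1) ≤ L * Real.sqrt ((T : ℝ) + 1) := by
    rw [hH]
    have hbound : ∑ s ∈ Icc 1 (T + 1 - 1), (h s / b s) ^ 2 ≤ (T : ℝ) * L ^ 2 := by
      simp only [Nat.add_sub_cancel]
      calc ∑ s ∈ Icc 1 T, (h s / b s) ^ 2 ≤ ∑ s ∈ Icc 1 T, L ^ 2 :=
            Finset.sum_le_sum fun s hs => haL s hs
      _ = (T : ℝ) * L ^ 2 := by
            rw [Finset.sum_const, Nat.card_Icc]
            simp [nsmul_eq_mul]
    calc Real.sqrt (L ^ 2 + ∑ s ∈ Icc 1 (T + 1 - 1), (h s / b s) ^ 2)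
        ≤ Real.sqrt (L ^ 2 * ((T : ℝ) + 1)) := Real.sqrt_le_sqrt (by nlinarith)
    _ = L * Real.sqrt ((T : ℝ) + 1) := by
          rw [Real.sqrt_mul (sq_nonneg L), Real.sqrt_sq hL.le]
  have hBT1 : B (T + 1) ≤ b T ^ 2 * sd * (L * Real.sqrt ((T : ℝ) + 1)) := by
    rw [hB, min_eq_right (Nat.le_succ T)]
    exact mul_le_mul_of_nonneg_left hHT (mul_nonneg (sq_nonneg _) hsd.le)
  have term1 : u ^ 2 * B (T + 1) / (2 * η)
      ≤ sd * L * Real.sqrt ((T : ℝ) + 1) * (u * b T) ^ 2 / (2 * η) := by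
    have hnum : u ^ 2 * B (T + 1) ≤ sd * L * Real.sqrt ((T : ℝ) + 1) * (u * b T) ^ 2 := by
      calc u ^ 2 * B (T + 1) ≤ u ^ 2 * (b T ^ 2 * sd * (L * Real.sqrt ((T : ℝ) + 1))) :=
            mul_le_mul_of_nonneg_left hBT1 (sq_nonneg u)
      _ = sd * L * Real.sqrt ((T : ℝ) + 1) * (u * b T) ^ 2 := by ring
    exact div_le_div_of_nonneg_right hnum (by linarith)
  -- bound the stability term
  have term2 : ∑ t ∈ Icc 1 T, η * (h t / b t) ^ 2 / (2 * sd * H t)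
      ≤ η * L * Real.sqrt ((T : ℝ) + 1) / sd := by
    have hA := lemA T (L ^ 2) (by positivity) (fun s => (h s / b s) ^ 2)
      (fun t ht => ⟨sq_nonneg _, haL t ht⟩)
    have hA2 : Real.sqrt (L ^ 2 + ∑ t ∈ Icc 1 T, (h t / b t) ^ 2)
        ≤ L * Real.sqrt ((T : ℝ) + 1) := by
      have h9 := hHT
      rw [hH] at h9
      simp only [Nat.add_sub_cancel] at h9
      exact h9
    have heach : ∀ t ∈ Icc 1 T, η * (h t / b t) ^ 2 / (2 * sd * H t)
        = (η / (2 * sd)) * ((h t / b t) ^ 2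
            / Real.sqrt (L ^ 2 + ∑ s ∈ Icc 1 (t - 1), (h s / b s) ^ 2)) := by
      intro t ht
      rw [hH, div_mul_div_comm]
    rw [Finset.sum_congr rfl heach, ← Finset.mul_sum]
    have hmul : (0:ℝ) ≤ η / (2 * sd) := by positivity
    calc (η / (2 * sd)) * ∑ t ∈ Icc 1 T, ((h t / b t) ^ 2
            / Real.sqrt (L ^ 2 + ∑ s ∈ Icc 1 (t - 1), (h s / b s) ^ 2))
        ≤ (η / (2 * sd)) * (2 * (L * Real.sqrt ((T : ℝ) + 1))) := by
          apply mul_le_mul_of_nonneg_left _ hmul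
          calc ∑ t ∈ Icc 1 T, ((h t / b t) ^ 2
                / Real.sqrt (L ^ 2 + ∑ s ∈ Icc 1 (t - 1), (h s / b s) ^ 2))
              ≤ 2 * Real.sqrt (L ^ 2 + ∑ t ∈ Icc 1 T, (h t / b t) ^ 2) := hA
          _ ≤ 2 * (L * Real.sqrt ((T : ℝ) + 1)) := by linarith
    _ = η * L * Real.sqrt ((T : ℝ) + 1) / sd := by
          field_simp
  linarith [main1, term1, term2]

/-- Theorem 1, second bound: scale-invariant OMD with the adaptive
per-coordinate regularizer (regularizer of type (11)).  All quantities of the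
algorithm are given explicitly through defining hypotheses; divisions by zero in Lean
equal zero, which realizes the convention `0/0 = 0`. -/
theorem stmt_9 {d T : ℕ} (hT : 1 ≤ T)
    (L η : ℝ) (hL : 0 < L) (hη : 0 < η)
    (loss : ℝ → ℝ → ℝ)
    (hconv : ∀ y : ℝ, ConvexOn ℝ Set.univ fun z => loss z y)
    (hlip : ∀ y z z' : ℝ, |loss z y - loss z' y| ≤ L * |z - z'|)
    (x : ℕ → Fin d → ℝ) (y : ℕ → ℝ)
    -- b t i = max over s ≤ t of |x_{s,i}|
    (b : ℕ → Fin d → ℝ)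
    (hb : ∀ t ∈ Icc 1 T, ∀ i, IsGreatest {r | ∃ s ∈ Icc 1 t, r = |x s i|} (b t i))
    -- subgradients: ℓ'_t = g_t x_t with g_t a subderivative of loss(·, y_t) at w_tᵀx_t
    (g : ℕ → ℝ) (ℓ' θ w : ℕ → Fin d → ℝ)
    (hsub : ∀ t ∈ Icc 1 T, ∀ z : ℝ,
      loss z (y t) ≥ loss (w t ⬝ᵥ x t) (y t) + g t * (z - w t ⬝ᵥ x t))
    (hℓ' : ∀ t ∈ Icc 1 T, ℓ' t = g t • x t)
    (hθ1 : θ 1 = 0)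
    (hθ : ∀ t ∈ Icc 1 T, θ (t + 1) = θ t - η • ℓ' t)
    (hw : ∀ t ∈ Icc 1 T, ∀ j, w t j =
      if 0 < b t j then
        θ t j / (b t j ^ 2 * Real.sqrt d
          * Real.sqrt (L ^ 2 + ∑ s ∈ Icc 1 (t - 1), (ℓ' s j / b s j) ^ 2))
      else 0) :
    ∀ u : Fin d → ℝ,
      ∑ t ∈ Icc 1 T, loss (w t ⬝ᵥ x t) (y t)
          - ∑ t ∈ Icc 1 T, loss (u ⬝ᵥ x t) (y t) ≤
        L * Real.sqrt (d * ((T : ℝ) + 1))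
          * (1 / (2 * η) * ∑ i, (u i * b T i) ^ 2 + η) := by
  intro u
  rcases Nat.eq_zero_or_pos d with hd | hd
  · subst hd
    have hx : ∀ v z : Fin 0 → ℝ, v ⬝ᵥ z = 0 := fun v z => by
      simp [dotProduct]
    simp [hx]
  · -- d ≥ 1
    have hsd : 0 < Real.sqrt d := Real.sqrt_pos.2 (by exact_mod_cast hd)
    -- subgradients are bounded by L
    have hgL : ∀ t ∈ Icc 1 T, |g t| ≤ L := by
      intro t ht
      set p := w t ⬝ᵥ x t with hp
      have h1 := hsub t ht (p + 1)
      have h2 := hsub t ht (p - 1)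
      have e1 : g t * (p + 1 - p) = g t := by ring
      have e2 : g t * (p - 1 - p) = -g t := by ring
      rw [e1] at h1
      rw [e2] at h2
      have hl1 := hlip (y t) (p + 1) p
      have hl2 := hlip (y t) (p - 1) p
      have d1 : (p + 1) - p = (1:ℝ) := by ring
      have d2 : (p - 1) - p = (-1:ℝ) := by ring
      rw [d1] at hl1
      rw [d2] at hl2
      simp only [abs_one, abs_neg, mul_one] at hl1 hl2
      rw [abs_le]
      constructor
      · have := (abs_le.1 hl2).2
        linarith
      · have := (abs_le.1 hl1).2
        linarith
    -- value of θ
    have hΘval : ∀ j : Fin d, ∀ t : ℕ, 1 ≤ t → t ≤ T + 1 →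
        θ t j = -η * ∑ s ∈ Icc 1 (t - 1), ℓ' s j := by
      intro j t
      induction t with
      | zero => omega
      | succ m ih =>
          intro _ hm2
          rcases Nat.eq_zero_or_pos m with hm | hm
          · subst hm
            rw [hθ1]
            simp
          · have hmT : m ∈ Icc 1 T := Finset.mem_Icc.2 ⟨hm, by omega⟩
            have hθmj : θ (m + 1) j = θ m j - η * ℓ' m j := by
              rw [hθ m hmT]
              simp
            rw [hθmj, ih hm (by omega), Nat.add_sub_cancel, sum_Icc_pred_add _ hm]
            ring
    -- linearize the losses
    have hlin : ∀ t ∈ Icc 1 T, loss (w t ⬝ᵥ x t) (y t) - loss (u ⬝ᵥ x t) (y t)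
        ≤ ∑ j, ℓ' t j * (w t j - u j) := by
      intro t ht
      have h1 := hsub t ht (u ⬝ᵥ x t)
      have e : g t * (w t ⬝ᵥ x t - u ⬝ᵥ x t) = -(g t * (u ⬝ᵥ x t - w t ⬝ᵥ x t)) := by ring
      have h2 : loss (w t ⬝ᵥ x t) (y t) - loss (u ⬝ᵥ x t) (y t)
          ≤ g t * (w t ⬝ᵥ x t - u ⬝ᵥ x t) := by
        rw [e]
        linarith
      have h3 : g t * (w t ⬝ᵥ x t - u ⬝ᵥ x t) = ∑ j, ℓ' t j * (w t j - u j) := by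
        rw [hℓ' t ht]
        simp only [dotProduct, Pi.smul_apply, smul_eq_mul]
        rw [← Finset.sum_sub_distrib, Finset.mul_sum]
        exact Finset.sum_congr rfl fun j _ => by ring
      linarith
    -- swap sums
    have hsum : ∑ t ∈ Icc 1 T, loss (w t ⬝ᵥ x t) (y t)
          - ∑ t ∈ Icc 1 T, loss (u ⬝ᵥ x t) (y t)
        ≤ ∑ j : Fin d, ∑ t ∈ Icc 1 T, ℓ' t j * (w t j - u j) := by
      calc ∑ t ∈ Icc 1 T, loss (w t ⬝ᵥ x t) (y t) - ∑ t ∈ Icc 1 T, loss (u ⬝ᵥ x t) (y t)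
          = ∑ t ∈ Icc 1 T, (loss (w t ⬝ᵥ x t) (y t) - loss (u ⬝ᵥ x t) (y t)) :=
            (Finset.sum_sub_distrib _ _).symm
      _ ≤ ∑ t ∈ Icc 1 T, ∑ j, ℓ' t j * (w t j - u j) := Finset.sum_le_sum hlin
      _ = ∑ j : Fin d, ∑ t ∈ Icc 1 T, ℓ' t j * (w t j - u j) := Finset.sum_comm
    -- per-coordinate bound
    have hper : ∀ j : Fin d, ∑ t ∈ Icc 1 T, ℓ' t j * (w t j - u j) ≤
        Real.sqrt d * L * Real.sqrt ((T : ℝ) + 1) * (u j * b T j) ^ 2 / (2 * η)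
          + η * L * Real.sqrt ((T : ℝ) + 1) / Real.sqrt d := by
      intro j
      have hb0 : ∀ t ∈ Icc 1 T, 0 ≤ b t j := by
        intro t ht
        obtain ⟨s, hs, he⟩ := (hb t ht j).1
        rw [he]
        exact abs_nonneg _
      have hbmono : ∀ s t : ℕ, s ∈ Icc 1 T → t ∈ Icc 1 T → s ≤ t → b s j ≤ b t j := by
        intro s t hs ht hst
        obtain ⟨s', hs', he⟩ := (hb s hs j).1
        obtain ⟨hs'1, hs'2⟩ := Finset.mem_Icc.1 hs'
        exact (hb t ht j).2 ⟨s', Finset.mem_Icc.2 ⟨hs'1, le_trans hs'2 hst⟩, he⟩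
      have hhb : ∀ t ∈ Icc 1 T, |ℓ' t j| ≤ L * b t j := by
        intro t ht
        have hx : |x t j| ≤ b t j :=
          (hb t ht j).2 ⟨t, Finset.mem_Icc.2 ⟨(Finset.mem_Icc.1 ht).1, le_refl t⟩, rfl⟩
        rw [hℓ' t ht]
        simp only [Pi.smul_apply, smul_eq_mul, abs_mul]
        exact mul_le_mul (hgL t ht) hx (abs_nonneg _) hL.le
      have hwif : ∀ t ∈ Icc 1 T, w t j =
          if 0 < b t j then
            -η * (∑ s ∈ Icc 1 (t - 1), ℓ' s j)
              / (b t j ^ 2 * Real.sqrt d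
                * Real.sqrt (L ^ 2 + ∑ s ∈ Icc 1 (t - 1), (ℓ' s j / b s j) ^ 2))
          else 0 := by
        intro t ht
        obtain ⟨ht1, ht2⟩ := Finset.mem_Icc.1 ht
        rw [hw t ht j, hΘval j t ht1 (by omega)]
      exact percoord T L η (Real.sqrt d) hL hη hsd
        (fun t => b t j) (fun t => ℓ' t j) (fun t => w t j)
        (fun t => ∑ s ∈ Icc 1 (t - 1), ℓ' s j)
        (fun t => Real.sqrt (L ^ 2 + ∑ s ∈ Icc 1 (t - 1), (ℓ' s j / b s j) ^ 2))
        (fun t => b (min t T) j ^ 2 * Real.sqrt d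
          * Real.sqrt (L ^ 2 + ∑ s ∈ Icc 1 (t - 1), (ℓ' s j / b s j) ^ 2))
        (fun t => η * (∑ s ∈ Icc 1 (t - 1), ℓ' s j) ^ 2
          / (2 * (b (min t T) j ^ 2 * Real.sqrt d
              * Real.sqrt (L ^ 2 + ∑ s ∈ Icc 1 (t - 1), (ℓ' s j / b s j) ^ 2))))
        (u j) hb0 hbmono hhb (fun t => rfl) (fun t => rfl) (fun t => rfl) (fun t => rfl) hwif
    -- assemble
    have final : ∑ j : Fin d,
        (Real.sqrt d * L * Real.sqrt ((T : ℝ) + 1) * (u j * b T j) ^ 2 / (2 * η)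
          + η * L * Real.sqrt ((T : ℝ) + 1) / Real.sqrt d)
        = L * Real.sqrt (d * ((T : ℝ) + 1))
          * (1 / (2 * η) * ∑ i, (u i * b T i) ^ 2 + η) := by
      rw [Finset.sum_add_distrib, Finset.sum_const, Finset.card_univ, Fintype.card_fin,
        ← Finset.sum_div, ← Finset.mul_sum]
      have hdd : Real.sqrt d * Real.sqrt d = (d : ℝ) := Real.mul_self_sqrt (Nat.cast_nonneg d)
      have hsplit : Real.sqrt (d * ((T : ℝ) + 1))
          = Real.sqrt d * Real.sqrt ((T : ℝ) + 1) := Real.sqrt_mul (Nat.cast_nonneg d) _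
      rw [hsplit, nsmul_eq_mul]
      have hstep : (d : ℝ) * (η * L * Real.sqrt ((T : ℝ) + 1) / Real.sqrt d)
          = Real.sqrt d * (η * L * Real.sqrt ((T : ℝ) + 1)) := by
        rw [← mul_div_assoc, div_eq_iff hsd.ne']
        nth_rewrite 1 [← hdd]
        ring
      rw [hstep]
      ring
    calc ∑ t ∈ Icc 1 T, loss (w t ⬝ᵥ x t) (y t) - ∑ t ∈ Icc 1 T, loss (u ⬝ᵥ x t) (y t)
        ≤ ∑ j : Fin d, ∑ t ∈ Icc 1 T, ℓ' t j * (w t j - u j) := hsum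
    _ ≤ ∑ j : Fin d,
          (Real.sqrt d * L * Real.sqrt ((T : ℝ) + 1) * (u j * b T j) ^ 2 / (2 * η)
            + η * L * Real.sqrt ((T : ℝ) + 1) / Real.sqrt d) :=
          Finset.sum_le_sum fun j _ => hper j
    _ = _ := final
end
end

section
/- Let x_1,…,x_T ∈ ℝ^d and r > 0, and for each t let D_t be the d×d diagonal matrix with entries (D_t)_{ii} = 1 + (1/r) Σ_{s=1}^t x_{s,i}². Then Σ_{t=1}^T x_tᵀ D_t^{−1} x_t ≤ r Σ_{i=1}^d ln( (1/r) Σ_{t=1}^T x_{t,i}² + 1 ). -/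
open Finset Matrix
open scoped BigOperators

noncomputable section

lemma key_telescope (r : ℝ) (hr : 0 < r) (a : ℕ → ℝ) (ha : ∀ t, 0 ≤ a t) (T : ℕ) :
    ∑ t ∈ Icc 1 T, a t / (r + ∑ s ∈ Icc 1 t, a s) ≤
      Real.log (r + ∑ t ∈ Icc 1 T, a t) - Real.log r := by
  induction T with
  | zero => simp
  | succ T ih =>
      have hS : ∀ n, 0 ≤ ∑ s ∈ Icc 1 n, a s := fun n =>
        Finset.sum_nonneg fun s _ => ha s
      have h1 : (1 : ℕ) ≤ T + 1 := Nat.le_add_left 1 T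
      rw [Finset.sum_Icc_succ_top h1, Finset.sum_Icc_succ_top h1]
      have hc : 0 < r + (∑ s ∈ Icc 1 T, a s + a (T + 1)) := by
        have := hS T; have := ha (T + 1); linarith
      have hcb : 0 < r + ∑ s ∈ Icc 1 T, a s := by have := hS T; linarith
      have hstep : a (T + 1) / (r + (∑ s ∈ Icc 1 T, a s + a (T + 1))) ≤
          Real.log (r + (∑ s ∈ Icc 1 T, a s + a (T + 1))) -
            Real.log (r + ∑ s ∈ Icc 1 T, a s) := by
        set c := r + (∑ s ∈ Icc 1 T, a s + a (T + 1)) with hcdef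
        set b := a (T + 1)
        have hcb' : c - b = r + ∑ s ∈ Icc 1 T, a s := by simp [hcdef]; ring
        have hlog : Real.log ((c - b) / c) ≤ (c - b) / c - 1 :=
          Real.log_le_sub_one_of_pos (by rw [hcb']; positivity)
        rw [Real.log_div (by rw [hcb']; linarith) (ne_of_gt hc)] at hlog
        rw [hcb'] at hlog
        have : (c - b) / c - 1 = -(b / c) := by
          field_simp
          ring
        rw [hcb'] at this
        rw [this] at hlog
        linarith
      calc ∑ t ∈ Icc 1 T, a t / (r + ∑ s ∈ Icc 1 t, a s) +
            a (T + 1) / (r + (∑ s ∈ Icc 1 T, a s + a (T + 1)))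
          ≤ (Real.log (r + ∑ t ∈ Icc 1 T, a t) - Real.log r) +
            (Real.log (r + (∑ s ∈ Icc 1 T, a s + a (T + 1))) -
              Real.log (r + ∑ s ∈ Icc 1 T, a s)) := by
            exact add_le_add ih hstep
        _ = Real.log (r + (∑ t ∈ Icc 1 T, a t + a (T + 1))) - Real.log r := by ring
  
/-- Lemma 4: the diagonal log-determinant style bound.
`D t` is the diagonal matrix with entries `1 + (1/r) Σ_{s=1}^t x_{s,i}²`
(the diagonal of `I + (1/r) Σ_{s≤t} x_s x_sᵀ`). -/
theorem stmt_13 {d T : ℕ} (x : ℕ → Fin d → ℝ) (r : ℝ) (hr : 0 < r)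
    (D : ℕ → Matrix (Fin d) (Fin d) ℝ)
    (hD : ∀ t ∈ Icc 1 T,
      D t = Matrix.diagonal fun i => 1 + 1 / r * ∑ s ∈ Icc 1 t, x s i ^ 2) :
    ∑ t ∈ Icc 1 T, x t ⬝ᵥ ((D t)⁻¹ *ᵥ x t) ≤
      r * ∑ i, Real.log (1 / r * ∑ t ∈ Icc 1 T, x t i ^ 2 + 1) := by
  have hS : ∀ (i : Fin d) (n : ℕ), 0 ≤ ∑ s ∈ Icc 1 n, x s i ^ 2 := fun i n =>
    Finset.sum_nonneg fun s _ => sq_nonneg _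
  have hterm : ∀ t ∈ Icc 1 T, x t ⬝ᵥ ((D t)⁻¹ *ᵥ x t) =
      ∑ i, r * (x t i ^ 2 / (r + ∑ s ∈ Icc 1 t, x s i ^ 2)) := by
    intro t ht
    have hpos : ∀ i : Fin d, 0 < 1 + 1 / r * ∑ s ∈ Icc 1 t, x s i ^ 2 := by
      intro i; have := hS i t; positivity
    have hdinv : (Matrix.diagonal fun i => 1 + 1 / r * ∑ s ∈ Icc 1 t, x s i ^ 2)⁻¹ =
        Matrix.diagonal fun i => (1 + 1 / r * ∑ s ∈ Icc 1 t, x s i ^ 2)⁻¹ := by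
      apply Matrix.inv_eq_right_inv
      rw [Matrix.diagonal_mul_diagonal]
      convert Matrix.diagonal_one using 2
      funext i
      exact mul_inv_cancel₀ (hpos i).ne'
    rw [hD t ht, hdinv, dotProduct]
    refine Finset.sum_congr rfl fun i _ => ?_
    have hpos := hpos i
    rw [Matrix.mulVec_diagonal]
    rw [show x t i * ((1 + 1 / r * ∑ s ∈ Icc 1 t, x s i ^ 2)⁻¹ * x t i) =
      x t i ^ 2 / (1 + 1 / r * ∑ s ∈ Icc 1 t, x s i ^ 2) by ring]
    have h2 : (0:ℝ) < r + ∑ s ∈ Icc 1 t, x s i ^ 2 := by have := hS i t; positivity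
    rw [div_eq_iff hpos.ne']
    field_simp
  rw [Finset.sum_congr rfl hterm, Finset.sum_comm, Finset.mul_sum]
  refine Finset.sum_le_sum fun i _ => ?_
  rw [← Finset.mul_sum]
  have := key_telescope r hr (fun t => x t i ^ 2) (fun t => sq_nonneg _) T
  have hlog : Real.log (1 / r * ∑ t ∈ Icc 1 T, x t i ^ 2 + 1) =
      Real.log (r + ∑ t ∈ Icc 1 T, x t i ^ 2) - Real.log r := by
    rw [← Real.log_div (by have := hS i T; positivity) (ne_of_gt hr)]
    congr 1
    field_simp
    ring
  rw [hlog]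
  exact mul_le_mul_of_nonneg_left this hr.le
end
end

section
/- For all real numbers a, b, c, d, x > 0 and every n > 1, if x ≤ a ln(bx + c) + d, then x ≤ (n/(n−1)) · ( a ln(nab/e) + d ) + (c/b) · (1/(n−1)). -/
/-- Corollary 3: solving the implicit logarithmic inequality
`x ≤ a ln(bx + c) + d`. -/
theorem stmt_14 (a b c d x n : ℝ) (ha : 0 < a) (hb : 0 < b) (hc : 0 < c)
    (hd : 0 < d) (hx : 0 < x) (hn : 1 < n)
    (h : x ≤ a * Real.log (b * x + c) + d) :
    x ≤ n / (n - 1) * (a * Real.log (n * a * b / Real.exp 1) + d)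
      + c / b * (1 / (n - 1)) := by
  have hn0 : (0:ℝ) < n := by linarith
  have hn1 : (0:ℝ) < n - 1 := by linarith
  have hm : 0 < n * a * b := by positivity
  have hz : 0 < b * x + c := by positivity
  have hlog : Real.log (b * x + c) ≤ (b * x + c) / (n * a * b) - 1 + Real.log (n * a * b) := by
    have h1 := Real.log_le_sub_one_of_pos (show 0 < (b * x + c) / (n * a * b) by positivity)
    rw [Real.log_div hz.ne' hm.ne'] at h1
    linarith
  have hlm : Real.log (n * a * b / Real.exp 1) = Real.log (n * a * b) - 1 := by
    rw [Real.log_div hm.ne' (Real.exp_ne_zero 1), Real.log_exp]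
  set T := a * Real.log (n * a * b / Real.exp 1) + d with hT
  have key : x ≤ x / n + c / (n * b) + T := by
    have h2 : a * Real.log (b * x + c) ≤ a * ((b * x + c) / (n * a * b) - 1 + Real.log (n * a * b)) :=
      mul_le_mul_of_nonneg_left hlog ha.le
    have h3 : a * ((b * x + c) / (n * a * b)) = x / n + c / (n * b) := by
      field_simp
    rw [hT, hlm]
    nlinarith [h2, h3]
  have h4 : x * (n - 1) ≤ c / b + n * T := by
    have h5 := mul_le_mul_of_nonneg_right key hn0.le
    have e1 : (x / n) * n = x := div_mul_cancel₀ x hn0.ne'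
    have e2 : (c / (n * b)) * n = c / b := by field_simp
    nlinarith
  have h6 : x ≤ (c / b + n * T) / (n - 1) := (le_div_iff₀ hn1).mpr h4
  have h7 : (c / b + n * T) / (n - 1) = n / (n - 1) * T + c / b * (1 / (n - 1)) := by ring
  linarith [h7 ▸ h6]
end

section
/- For all real numbers a, b, c, d, x > 0, if x ≤ √(a ln(bx + 1) + c) + d, then x ≤ √( a ln( √8 · a b²/e + 2b√c + 2db + 2 ) + c ) + d. -/
private lemma aux_mul (b x a d s : ℝ) (hb : 0 ≤ b) (hx : x ≤ a * b + 2 * d + s) :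
    b * x ≤ a * b ^ 2 + 2 * d * b + b * s := by nlinarith

/-- Corollary 4: solving the implicit square-root-logarithmic
inequality `x ≤ √(a ln(bx + 1) + c) + d`. -/
theorem stmt_15 (a b c d x : ℝ) (ha : 0 < a) (hb : 0 < b) (hc : 0 < c)
    (hd : 0 < d) (hx : 0 < x)
    (h : x ≤ Real.sqrt (a * Real.log (b * x + 1) + c) + d) :
    x ≤ Real.sqrt (a * Real.log (Real.sqrt 8 * a * b ^ 2 / Real.exp 1
          + 2 * b * Real.sqrt c + 2 * d * b + 2) + c) + d := by
  set M := Real.sqrt 8 * a * b ^ 2 / Real.exp 1 + 2 * b * Real.sqrt c + 2 * d * b + 2 with hM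
  have h8 : (2.82 : ℝ) ≤ Real.sqrt 8 := by
    rw [show (8:ℝ) = 2.82^2 + 0.0476 by norm_num]
    nlinarith [Real.sq_sqrt (by norm_num : (0:ℝ) ≤ 2.82^2 + 0.0476),
      Real.sqrt_nonneg ((2.82:ℝ)^2 + 0.0476)]
  have he : Real.exp 1 < 2.7182818286 := Real.exp_one_lt_d9
  have he0 : (0:ℝ) < Real.exp 1 := Real.exp_pos 1
  have hsc : (0:ℝ) ≤ Real.sqrt c := Real.sqrt_nonneg c
  have hMge : (2:ℝ) ≤ M := by
    have h1 : 0 ≤ Real.sqrt 8 * a * b ^ 2 / Real.exp 1 := by positivity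
    have h2 : 0 ≤ 2 * b * Real.sqrt c := by positivity
    have h3 : 0 ≤ 2 * d * b := by positivity
    rw [hM]; linarith
  have hlogM : 0 ≤ Real.log M := Real.log_nonneg (by linarith)
  rcases le_or_gt x (d + Real.sqrt c) with hcase | hcase
  · have : Real.sqrt c ≤ Real.sqrt (a * Real.log M + c) := by
      apply Real.sqrt_le_sqrt; nlinarith
    linarith
  · -- hard case: x ≤ a*b + 2*d + √c
    have hxd : 0 ≤ x - d := by linarith
    have hb1 : (0:ℝ) < b * x + 1 := by positivity
    have hlog : Real.log (b * x + 1) ≤ b * x := by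
      have := Real.log_le_sub_one_of_pos hb1
      linarith
    have hsqle : x - d ≤ Real.sqrt (a * Real.log (b * x + 1) + c) := by linarith
    have hsq : (x - d)^2 ≤ a * Real.log (b * x + 1) + c := by
      have hnn : 0 ≤ a * Real.log (b * x + 1) + c := by
        have : 0 ≤ Real.log (b * x + 1) := Real.log_nonneg (by nlinarith)
        nlinarith
      nlinarith [Real.sq_sqrt hnn, Real.sqrt_nonneg (a * Real.log (b * x + 1) + c)]
    have hcx : c ≤ Real.sqrt c * x := by
      nlinarith [Real.sq_sqrt hc.le]
    have hxb : x ≤ a * b + 2 * d + Real.sqrt c := by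
      nlinarith [mul_le_mul_of_nonneg_left hlog ha.le]
    have hbx : b * x + 1 ≤ M := by
      have he2 : Real.exp 1 ≤ Real.sqrt 8 := by linarith
      have h1 : a * b ^ 2 ≤ Real.sqrt 8 * a * b ^ 2 / Real.exp 1 := by
        rw [le_div_iff₀ he0]
        nlinarith [mul_le_mul_of_nonneg_left he2 (by positivity : (0:ℝ) ≤ a * b ^ 2)]
      have h2 := aux_mul b x a d (Real.sqrt c) hb.le hxb
      have h3 : 0 ≤ b * Real.sqrt c := by positivity
      rw [hM]; linarith
    have hlog2 : Real.log (b * x + 1) ≤ Real.log M := Real.log_le_log hb1 hbx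
    have hmul := mul_le_mul_of_nonneg_left hlog2 ha.le
    have : Real.sqrt (a * Real.log (b * x + 1) + c) ≤ Real.sqrt (a * Real.log M + c) := by
      apply Real.sqrt_le_sqrt; linarith
    linarith
end

section
/- Let (x_1,y_1),…,(x_T,y_T) ∈ ℝ^d×ℝ and a > 0. Define A_0 = aI and A_t = A_{t−1} + x_t x_tᵀ for t ≥ 1, and let the Vovk-Azoury-Warmuth predictor be w_t = A_t^{−1} Σ_{s=1}^{t−1} y_s x_s. Then for every u ∈ ℝ^d: (1/2) Σ_{t=1}^T (y_t − w_tᵀx_t)² − (1/2) Σ_{t=1}^T (y_t − uᵀx_t)² ≤ (a/2)‖u‖² + (Y²/2) Σ_{t=1}^T x_tᵀ A_t^{−1} x_t, where Y = max_{t ≤ T} |y_t| and ‖·‖ is the Euclidean norm. -/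
open Finset Matrix
open scoped BigOperators

noncomputable section

namespace VAW

variable {d : ℕ}

lemma vvMulVec (x y v : Fin d → ℝ) : vecMulVec x y *ᵥ v = (y ⬝ᵥ v) • x := by
  ext i
  simp only [mulVec, dotProduct, vecMulVec_apply, Pi.smul_apply, smul_eq_mul, Finset.sum_mul]
  exact Finset.sum_congr rfl fun j _ => by ring

lemma vvx_psd (x : Fin d → ℝ) : (vecMulVec x x).PosSemidef := by
  rw [vecMulVec_eq (Fin 1)]
  have h := Matrix.posSemidef_conjTranspose_mul_self (replicateRow (Fin 1) x)
  simp at h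
  exact h

lemma psd_dot {M : Matrix (Fin d) (Fin d) ℝ} (h : M.PosSemidef) (v : Fin d → ℝ) :
    0 ≤ v ⬝ᵥ M *ᵥ v := by simpa using h.dotProduct_mulVec_nonneg v

lemma dotsymm {M : Matrix (Fin d) (Fin d) ℝ} (h : Mᵀ = M) (u v : Fin d → ℝ) :
    u ⬝ᵥ M *ᵥ v = v ⬝ᵥ M *ᵥ u := by
  rw [dotProduct_mulVec, ← mulVec_transpose, h, dotProduct_comm]

lemma pd_symm {M : Matrix (Fin d) (Fin d) ℝ} (h : M.PosDef) : Mᵀ = M := by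
  have := h.isHermitian
  rwa [Matrix.IsHermitian, conjTranspose_eq_transpose_of_trivial] at this

lemma inv_symm {M : Matrix (Fin d) (Fin d) ℝ} (h : M.PosDef) : (M⁻¹)ᵀ = M⁻¹ :=
  pd_symm h.inv

lemma inv_cancel {M : Matrix (Fin d) (Fin d) ℝ} (h : M.PosDef) (v : Fin d → ℝ) :
    M *ᵥ (M⁻¹ *ᵥ v) = v := by
  rw [mulVec_mulVec, Matrix.mul_nonsing_inv _ (isUnit_iff_ne_zero.2 h.det_pos.ne'), one_mulVec]

lemma inv_cancel' {M : Matrix (Fin d) (Fin d) ℝ} (h : M.PosDef) (v : Fin d → ℝ) :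
    M⁻¹ *ᵥ (M *ᵥ v) = v := by
  rw [mulVec_mulVec, Matrix.nonsing_inv_mul _ (isUnit_iff_ne_zero.2 h.det_pos.ne'), one_mulVec]

lemma sherman {B : Matrix (Fin d) (Fin d) ℝ} (hB : B.PosDef) (x b : Fin d → ℝ) :
    x ⬝ᵥ ((B + vecMulVec x x)⁻¹ *ᵥ b) = (x ⬝ᵥ B⁻¹ *ᵥ b) / (1 + x ⬝ᵥ B⁻¹ *ᵥ x) ∧
    b ⬝ᵥ ((B + vecMulVec x x)⁻¹ *ᵥ b)
      = b ⬝ᵥ B⁻¹ *ᵥ b - (x ⬝ᵥ B⁻¹ *ᵥ b) ^ 2 / (1 + x ⬝ᵥ B⁻¹ *ᵥ x) := by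
  set A := B + vecMulVec x x with hAdef
  have hApd : A.PosDef := hB.add_posSemidef (vvx_psd x)
  set s := x ⬝ᵥ B⁻¹ *ᵥ x with hs
  set c := x ⬝ᵥ B⁻¹ *ᵥ b with hc
  have hs0 : 0 ≤ s := psd_dot hB.inv.posSemidef x
  have hs1 : (0:ℝ) < 1 + s := by linarith
  set v := A⁻¹ *ᵥ b with hv
  have hAv : A *ᵥ v = b := inv_cancel hApd b
  have hBv : B *ᵥ v = b - (x ⬝ᵥ v) • x := by
    have : A *ᵥ v = B *ᵥ v + (x ⬝ᵥ v) • x := by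
      rw [hAdef, add_mulVec, vvMulVec]
    rw [this] at hAv
    linear_combination (norm := module) hAv
  have hvB : v = B⁻¹ *ᵥ b - (x ⬝ᵥ v) • (B⁻¹ *ᵥ x) := by
    conv_lhs => rw [← inv_cancel' hB v, hBv]
    rw [mulVec_sub, mulVec_smul]
  have hxv : x ⬝ᵥ v = c - (x ⬝ᵥ v) * s := by
    conv_lhs => rw [hvB]
    rw [dotProduct_sub, dotProduct_smul, smul_eq_mul, ← hc, ← hs]
  have hxv' : x ⬝ᵥ v = c / (1 + s) := by
    field_simp
    linarith [hxv]
  have hbBx : b ⬝ᵥ B⁻¹ *ᵥ x = c := dotsymm (inv_symm hB) b x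
  have hbv : b ⬝ᵥ v = b ⬝ᵥ B⁻¹ *ᵥ b - (c / (1 + s)) * c := by
    conv_lhs => rw [hvB]
    rw [dotProduct_sub, dotProduct_smul, smul_eq_mul, hbBx, hxv']
  refine ⟨hxv', ?_⟩
  rw [hbv]
  ring

lemma bilin (M : Matrix (Fin d) (Fin d) ℝ) (p q : Fin d → ℝ) (r : ℝ) :
    (p + r • q) ⬝ᵥ M *ᵥ (p + r • q)
      = p ⬝ᵥ M *ᵥ p + r * (p ⬝ᵥ M *ᵥ q) + r * (q ⬝ᵥ M *ᵥ p) + r ^ 2 * (q ⬝ᵥ M *ᵥ q) := by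
  rw [mulVec_add, mulVec_smul, dotProduct_add, add_dotProduct, add_dotProduct,
      dotProduct_smul, dotProduct_smul, smul_dotProduct, smul_dotProduct]
  simp only [smul_eq_mul]
  ring

lemma dot_sum {ι : Type*} (S : Finset ι) (u : Fin d → ℝ) (v : ι → Fin d → ℝ) :
    u ⬝ᵥ (∑ s ∈ S, v s) = ∑ s ∈ S, u ⬝ᵥ v s := by
  simp only [dotProduct, Finset.sum_apply, Finset.mul_sum]
  exact Finset.sum_comm

lemma sumMulVec {ι : Type*} (S : Finset ι) (M : ι → Matrix (Fin d) (Fin d) ℝ)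
    (v : Fin d → ℝ) : (∑ s ∈ S, M s) *ᵥ v = ∑ s ∈ S, M s *ᵥ v := by
  ext i
  simp only [mulVec, dotProduct, Matrix.sum_apply, Finset.sum_apply, Finset.sum_mul]
  exact Finset.sum_comm

lemma tele (f : ℕ → ℝ) (n : ℕ) : ∑ t ∈ Icc 1 n, (f t - f (t - 1)) = f n - f 0 := by
  induction n with
  | zero => simp
  | succ n ih =>
    rw [Finset.sum_Icc_succ_top (by omega), ih, Nat.add_sub_cancel]
    ring

lemma scalar_step (y Y c s : ℝ) (hs : 0 ≤ s) (hy : y ^ 2 ≤ Y ^ 2) :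
    1 / 2 * (y - c / (1 + s)) ^ 2 ≤
      1 / 2 * y ^ 2
        - 1 / 2 * (2 * y * (c / (1 + s)) + y ^ 2 * (s / (1 + s)) - c ^ 2 / (1 + s))
        + Y ^ 2 / 2 * (s / (1 + s)) := by
  have h1 : (0:ℝ) < 1 + s := by linarith
  have e : (y - c / (1 + s)) ^ 2
      = y ^ 2 - 2 * y * (c / (1 + s)) + c ^ 2 / (1 + s) ^ 2 := by
    field_simp
    ring
  rw [e]
  have h2 : c ^ 2 / (1 + s) ^ 2 ≤ c ^ 2 / (1 + s) := by
    rw [sq (1 + s), ← div_div]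
    exact div_le_self (by positivity) (by linarith)
  have hq : (0:ℝ) ≤ s / (1 + s) := by positivity
  have h3 := mul_le_mul_of_nonneg_right hy hq
  linarith

end VAW

/-- regret bound for the Vovk-Azoury-Warmuth forecaster for online
regression with the square loss.  `A_0 = aI`, `A_t = A_{t-1} + x_t x_tᵀ`, the
predictor is `w_t = A_t⁻¹ Σ_{s<t} y_s x_s`, `Y = max_{t ≤ T} |y_t|`, and `‖u‖` is the
Euclidean norm (so `‖u‖² = Σ_i u_i²`). -/
theorem stmt_16 {d T : ℕ} (hT : 1 ≤ T)
    (x : ℕ → Fin d → ℝ) (y : ℕ → ℝ) (a : ℝ) (ha : 0 < a)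
    (A : ℕ → Matrix (Fin d) (Fin d) ℝ)
    (hA0 : A 0 = a • (1 : Matrix (Fin d) (Fin d) ℝ))
    (hA : ∀ t ∈ Icc 1 T, A t = A (t - 1) + Matrix.vecMulVec (x t) (x t))
    (w : ℕ → Fin d → ℝ)
    (hw : ∀ t ∈ Icc 1 T, w t = (A t)⁻¹ *ᵥ ∑ s ∈ Icc 1 (t - 1), y s • x s)
    (Y : ℝ) (hY : IsGreatest {r | ∃ t ∈ Icc 1 T, r = |y t|} Y) :
    ∀ u : Fin d → ℝ,
      1 / 2 * ∑ t ∈ Icc 1 T, (y t - w t ⬝ᵥ x t) ^ 2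
          - 1 / 2 * ∑ t ∈ Icc 1 T, (y t - u ⬝ᵥ x t) ^ 2 ≤
        a / 2 * ∑ i, u i ^ 2
          + Y ^ 2 / 2 * ∑ t ∈ Icc 1 T, x t ⬝ᵥ ((A t)⁻¹ *ᵥ x t) := by
  intro u
  classical
  set b : ℕ → Fin d → ℝ := fun t => ∑ s ∈ Icc 1 t, y s • x s with hb
  have hpd : ∀ t, t ≤ T → (A t).PosDef := by
    intro t
    induction t with
    | zero =>
      intro _
      rw [hA0, Matrix.smul_one_eq_diagonal]
      exact Matrix.PosDef.diagonal fun _ => ha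
    | succ n ih =>
      intro h
      have hmem : n + 1 ∈ Icc 1 T := Finset.mem_Icc.mpr ⟨by omega, h⟩
      have := hA (n + 1) hmem
      rw [Nat.add_sub_cancel] at this
      rw [this]
      exact (ih (by omega)).add_posSemidef (VAW.vvx_psd _)
  have hYsq : ∀ t ∈ Icc 1 T, (y t) ^ 2 ≤ Y ^ 2 := by
    intro t ht
    have h1 : |y t| ≤ Y := hY.2 ⟨t, ht, rfl⟩
    nlinarith [abs_nonneg (y t), sq_abs (y t)]
  set Φ : ℕ → ℝ :=
    fun t => 1 / 2 * ∑ s ∈ Icc 1 t, (y s) ^ 2 - 1 / 2 * (b t ⬝ᵥ ((A t)⁻¹ *ᵥ b t)) with hΦ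
  have hΦ0 : Φ 0 = 0 := by simp [hΦ, hb]
  have hstep : ∀ t ∈ Icc 1 T,
      1 / 2 * (y t - w t ⬝ᵥ x t) ^ 2
        ≤ Φ t - Φ (t - 1) + Y ^ 2 / 2 * (x t ⬝ᵥ ((A t)⁻¹ *ᵥ x t)) := by
    intro t ht
    obtain ⟨ht1, ht2⟩ := Finset.mem_Icc.mp ht
    obtain ⟨n, rfl⟩ : ∃ n, t = n + 1 := ⟨t - 1, by omega⟩
    have hBpd : (A n).PosDef := hpd n (by omega)
    have hAt : A (n + 1) = A n + vecMulVec (x (n + 1)) (x (n + 1)) := by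
      have := hA (n + 1) ht
      rwa [Nat.add_sub_cancel] at this
    have hs0 : 0 ≤ x (n + 1) ⬝ᵥ (A n)⁻¹ *ᵥ x (n + 1) :=
      VAW.psd_dot hBpd.inv.posSemidef _
    have S1 : x (n + 1) ⬝ᵥ ((A (n + 1))⁻¹ *ᵥ b n)
        = (x (n + 1) ⬝ᵥ (A n)⁻¹ *ᵥ b n) / (1 + x (n + 1) ⬝ᵥ (A n)⁻¹ *ᵥ x (n + 1)) := by
      rw [hAt]; exact (VAW.sherman hBpd (x (n + 1)) (b n)).1
    have S2 : b n ⬝ᵥ ((A (n + 1))⁻¹ *ᵥ b n)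
        = b n ⬝ᵥ (A n)⁻¹ *ᵥ b n
          - (x (n + 1) ⬝ᵥ (A n)⁻¹ *ᵥ b n) ^ 2
            / (1 + x (n + 1) ⬝ᵥ (A n)⁻¹ *ᵥ x (n + 1)) := by
      rw [hAt]; exact (VAW.sherman hBpd (x (n + 1)) (b n)).2
    have S3 : x (n + 1) ⬝ᵥ ((A (n + 1))⁻¹ *ᵥ x (n + 1))
        = (x (n + 1) ⬝ᵥ (A n)⁻¹ *ᵥ x (n + 1))
          / (1 + x (n + 1) ⬝ᵥ (A n)⁻¹ *ᵥ x (n + 1)) := by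
      rw [hAt]; exact (VAW.sherman hBpd (x (n + 1)) (x (n + 1))).1
    have hsym : ((A (n + 1))⁻¹)ᵀ = (A (n + 1))⁻¹ := VAW.inv_symm (hpd (n + 1) ht2)
    have S1' : b n ⬝ᵥ ((A (n + 1))⁻¹ *ᵥ x (n + 1))
        = (x (n + 1) ⬝ᵥ (A n)⁻¹ *ᵥ b n) / (1 + x (n + 1) ⬝ᵥ (A n)⁻¹ *ᵥ x (n + 1)) := by
      rw [VAW.dotsymm hsym]; exact S1
    have hwx : w (n + 1) ⬝ᵥ x (n + 1)
        = (x (n + 1) ⬝ᵥ (A n)⁻¹ *ᵥ b n) / (1 + x (n + 1) ⬝ᵥ (A n)⁻¹ *ᵥ x (n + 1)) := by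
      rw [hw (n + 1) ht, dotProduct_comm]
      have hbn : (∑ s ∈ Icc 1 (n + 1 - 1), y s • x s) = b n := by
        simp only [Nat.add_sub_cancel, hb]
      rw [hbn]
      exact S1
    have hbstep : b (n + 1) = b n + y (n + 1) • x (n + 1) := by
      simp only [hb]
      exact Finset.sum_Icc_succ_top (by omega) _
    have hq : b (n + 1) ⬝ᵥ ((A (n + 1))⁻¹ *ᵥ b (n + 1))
        = b n ⬝ᵥ (A n)⁻¹ *ᵥ b n
          - (x (n + 1) ⬝ᵥ (A n)⁻¹ *ᵥ b n) ^ 2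
              / (1 + x (n + 1) ⬝ᵥ (A n)⁻¹ *ᵥ x (n + 1))
          + 2 * y (n + 1)
              * ((x (n + 1) ⬝ᵥ (A n)⁻¹ *ᵥ b n)
                / (1 + x (n + 1) ⬝ᵥ (A n)⁻¹ *ᵥ x (n + 1)))
          + (y (n + 1)) ^ 2
              * ((x (n + 1) ⬝ᵥ (A n)⁻¹ *ᵥ x (n + 1))
                / (1 + x (n + 1) ⬝ᵥ (A n)⁻¹ *ᵥ x (n + 1))) := by
      rw [hbstep, VAW.bilin, S1, S1', S2, S3]
      ring
    have hsplit : ∑ s ∈ Icc 1 (n + 1), (y s) ^ 2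
        = (∑ s ∈ Icc 1 n, (y s) ^ 2) + (y (n + 1)) ^ 2 :=
      Finset.sum_Icc_succ_top (by omega) _
    have hΦdiff : Φ (n + 1) - Φ (n + 1 - 1)
        = 1 / 2 * (y (n + 1)) ^ 2
          - 1 / 2 * (b (n + 1) ⬝ᵥ ((A (n + 1))⁻¹ *ᵥ b (n + 1))
              - b n ⬝ᵥ ((A n)⁻¹ *ᵥ b n)) := by
      simp only [hΦ, Nat.add_sub_cancel, hsplit]
      ring
    have hYn : (y (n + 1)) ^ 2 ≤ Y ^ 2 := hYsq (n + 1) ht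
    have key := VAW.scalar_step (y (n + 1)) Y
      (x (n + 1) ⬝ᵥ (A n)⁻¹ *ᵥ b n) (x (n + 1) ⬝ᵥ (A n)⁻¹ *ᵥ x (n + 1)) hs0 hYn
    rw [hΦdiff, hwx, hq, S3]
    linarith [key]
  have hsum := Finset.sum_le_sum hstep
  rw [Finset.sum_add_distrib, VAW.tele Φ T, hΦ0, ← Finset.mul_sum,
      ← Finset.mul_sum] at hsum
  -- final minimization bound
  have hTpd : (A T).PosDef := hpd T le_rfl
  have hAform : A T = a • (1 : Matrix (Fin d) (Fin d) ℝ)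
      + ∑ s ∈ Icc 1 T, vecMulVec (x s) (x s) := by
    have H : ∀ t, t ≤ T → A t = a • (1 : Matrix (Fin d) (Fin d) ℝ)
        + ∑ s ∈ Icc 1 t, vecMulVec (x s) (x s) := by
      intro t
      induction t with
      | zero => intro _; simp [hA0]
      | succ n ih =>
        intro h
        have h' := hA (n + 1) (Finset.mem_Icc.mpr ⟨by omega, h⟩)
        rw [Nat.add_sub_cancel] at h'
        rw [h', ih (by omega), Finset.sum_Icc_succ_top (by omega : 1 ≤ n + 1), add_assoc]
    exact H T le_rfl
  have hqnn : 0 ≤ (u - ((A T)⁻¹ *ᵥ b T)) ⬝ᵥ (A T) *ᵥ (u - ((A T)⁻¹ *ᵥ b T)) :=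
    VAW.psd_dot hTpd.posSemidef _
  have hAm : A T *ᵥ ((A T)⁻¹ *ᵥ b T) = b T := VAW.inv_cancel hTpd _
  have hsymA : (A T)ᵀ = A T := VAW.pd_symm hTpd
  have hexp : (u - ((A T)⁻¹ *ᵥ b T)) ⬝ᵥ (A T) *ᵥ (u - ((A T)⁻¹ *ᵥ b T))
      = u ⬝ᵥ (A T) *ᵥ u - 2 * (u ⬝ᵥ b T) + b T ⬝ᵥ ((A T)⁻¹ *ᵥ b T) := by
    rw [mulVec_sub, hAm, dotProduct_sub, sub_dotProduct, sub_dotProduct,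
        VAW.dotsymm hsymA ((A T)⁻¹ *ᵥ b T) u, hAm,
        dotProduct_comm ((A T)⁻¹ *ᵥ b T) (b T)]
    ring
  have hquad : u ⬝ᵥ (A T) *ᵥ u
      = a * (∑ i, u i ^ 2) + ∑ t ∈ Icc 1 T, (u ⬝ᵥ x t) ^ 2 := by
    rw [hAform, add_mulVec, dotProduct_add, VAW.sumMulVec, VAW.dot_sum]
    congr 1
    · rw [smul_mulVec, one_mulVec, dotProduct_smul, smul_eq_mul]
      congr 1
      simp [dotProduct, sq]
    · refine Finset.sum_congr rfl fun t _ => ?_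
      rw [VAW.vvMulVec, dotProduct_smul, smul_eq_mul, dotProduct_comm (x t) u]
      ring
  have hub : u ⬝ᵥ b T = ∑ t ∈ Icc 1 T, y t * (u ⬝ᵥ x t) := by
    simp only [hb]
    rw [VAW.dot_sum]
    refine Finset.sum_congr rfl fun t _ => ?_
    rw [dotProduct_smul, smul_eq_mul]
  have hexp2 : ∑ t ∈ Icc 1 T, (y t - u ⬝ᵥ x t) ^ 2
      = ∑ t ∈ Icc 1 T, (y t) ^ 2 - 2 * ∑ t ∈ Icc 1 T, y t * (u ⬝ᵥ x t)
        + ∑ t ∈ Icc 1 T, (u ⬝ᵥ x t) ^ 2 := by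
    rw [Finset.mul_sum, ← Finset.sum_sub_distrib, ← Finset.sum_add_distrib]
    exact Finset.sum_congr rfl fun t _ => by ring
  have hQ : 2 * (u ⬝ᵥ b T) - u ⬝ᵥ (A T) *ᵥ u ≤ b T ⬝ᵥ ((A T)⁻¹ *ᵥ b T) := by
    have := hexp ▸ hqnn
    linarith
  have hΦT : Φ T = 1 / 2 * ∑ s ∈ Icc 1 T, (y s) ^ 2
      - 1 / 2 * (b T ⬝ᵥ ((A T)⁻¹ *ᵥ b T)) := by simp only [hΦ]
  linarith [hsum, hQ, hΦT, hquad, hub, hexp2]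
end
end

section
/- Let (x_t,y_t) ∈ ℝ^d×{−1,+1} for t = 1,…,T, fix r > 0, and define the second-order algorithm: θ_1 = 0, A_0 = I; at step t set Ã_t = A_{t−1} + (1/r) x_t x_tᵀ and w_t = Ã_t^{−1} θ_t; if ℓ_t(w_t) > 0 set θ_{t+1} = θ_t + y_t x_t and A_t = Ã_t, otherwise θ_{t+1} = θ_t and A_t = A_{t−1}. Let m_t = θ_tᵀ A_{t−1}^{−1} x_t, χ_t = x_tᵀ A_{t−1}^{−1} x_t, and V = M ∪ U = {t ≤ T : ℓ_t(w_t) > 0}. Then for every u ∈ ℝ^d: M + U − L(u) ≤ √( r‖u‖² + Σ_{t∈V} (uᵀx_t)² ) · √( max{0, ln det(A_T) + Σ_{t∈V} m_t (2r y_t − m_t)/( r(r + χ_t) )} ), where ‖·‖ is the Euclidean norm. -/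
open Finset Matrix
open scoped BigOperators

noncomputable section

variable {d : ℕ}

lemma mulVec_vecMulVec' (a b v : Fin d → ℝ) :
    vecMulVec a b *ᵥ v = (b ⬝ᵥ v) • a := by
  ext i
  simp only [mulVec, vecMulVec_apply, dotProduct, Pi.smul_apply, smul_eq_mul, Finset.sum_mul]
  exact Finset.sum_congr rfl (fun j _ => by ring)

lemma mul_vecMulVec' (M : Matrix (Fin d) (Fin d) ℝ) (a b : Fin d → ℝ) :
    M * vecMulVec a b = vecMulVec (M *ᵥ a) b := by
  ext i j
  simp only [Matrix.mul_apply, vecMulVec_apply, mulVec, dotProduct, Finset.sum_mul]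
  exact Finset.sum_congr rfl (fun k _ => by ring)

lemma vecMulVec_mul' (M : Matrix (Fin d) (Fin d) ℝ) (a b : Fin d → ℝ) :
    vecMulVec a b * M = vecMulVec a (Mᵀ *ᵥ b) := by
  ext i j
  simp only [Matrix.mul_apply, vecMulVec_apply, mulVec, dotProduct, transpose_apply,
    Finset.mul_sum]
  exact Finset.sum_congr rfl (fun k _ => by ring)

lemma dot_vecMulVec (a b v u : Fin d → ℝ) :
    u ⬝ᵥ (vecMulVec a b *ᵥ v) = (u ⬝ᵥ a) * (b ⬝ᵥ v) := by
  rw [mulVec_vecMulVec', dotProduct_smul, smul_eq_mul]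
  ring

lemma vecMulVec_posSemidef (a : Fin d → ℝ) : (vecMulVec a a).PosSemidef := by
  rw [posSemidef_iff_dotProduct_mulVec]
  constructor
  · ext i j
    simp [vecMulVec_apply, mul_comm, conjTranspose, transpose_apply]
  · intro v
    have : star v ⬝ᵥ (vecMulVec a a *ᵥ v) = (a ⬝ᵥ v) ^ 2 := by
      have hsv : (star v : Fin d → ℝ) = v := by ext i; simp
      rw [hsv, dot_vecMulVec]
      rw [dotProduct_comm v a]; ring
    rw [this]; positivity

lemma smul_vecMulVec (c : ℝ) (a b : Fin d → ℝ) :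
    c • vecMulVec a b = vecMulVec (c • a) b := by
  ext i j; simp [vecMulVec_apply]; ring

lemma dot_symm (A : Matrix (Fin d) (Fin d) ℝ) (hA : Aᵀ = A) (a b : Fin d → ℝ) :
    a ⬝ᵥ (A *ᵥ b) = b ⬝ᵥ (A *ᵥ a) := by
  have h1 : a ⬝ᵥ (A *ᵥ b) = (Aᵀ *ᵥ a) ⬝ᵥ b := by
    simp only [mulVec, dotProduct, transpose_apply, Finset.sum_mul, Finset.mul_sum]
    rw [Finset.sum_comm]
    exact Finset.sum_congr rfl fun i _ => Finset.sum_congr rfl fun j _ => by ring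
  rw [h1, hA, dotProduct_comm]

lemma posdef_transpose {A : Matrix (Fin d) (Fin d) ℝ} (hA : A.PosDef) : Aᵀ = A := by
  have := hA.isHermitian
  rwa [IsHermitian, conjTranspose_eq_transpose_of_trivial] at this

lemma inv_transpose_eq {A : Matrix (Fin d) (Fin d) ℝ} (hA : A.PosDef) : (A⁻¹)ᵀ = A⁻¹ := by
  rw [Matrix.transpose_nonsing_inv, posdef_transpose hA]

lemma psd_smul_vecMulVec {c : ℝ} (hc : 0 ≤ c) (a : Fin d → ℝ) :
    (c • vecMulVec a a).PosSemidef := by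
  rw [smul_vecMulVec]
  have h : c • vecMulVec a a = vecMulVec (Real.sqrt c • a) (Real.sqrt c • a) := by
    ext i j
    simp only [vecMulVec_apply, Pi.smul_apply, smul_eq_mul, Matrix.smul_apply]
    rw [show Real.sqrt c * a i * (Real.sqrt c * a j) = (Real.sqrt c * Real.sqrt c) * (a i * a j) by ring,
      Real.mul_self_sqrt hc]
  rw [← smul_vecMulVec, h]
  exact vecMulVec_posSemidef _

lemma chi_nonneg {A : Matrix (Fin d) (Fin d) ℝ} (hA : A.PosDef) (v : Fin d → ℝ) :
    0 ≤ v ⬝ᵥ (A *ᵥ v) := by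
  have := hA.posSemidef.dotProduct_mulVec_nonneg v
  simpa using this

lemma posdef_update {A : Matrix (Fin d) (Fin d) ℝ} (hA : A.PosDef) {c : ℝ} (hc : 0 ≤ c)
    (a : Fin d → ℝ) : (A + c • vecMulVec a a).PosDef :=
  hA.add_posSemidef (psd_smul_vecMulVec hc a)

lemma sherman_morrison {A : Matrix (Fin d) (Fin d) ℝ} (hA : A.PosDef) {c : ℝ} (hc : 0 ≤ c)
    (a : Fin d → ℝ) :
    (A + c • vecMulVec a a)⁻¹
      = A⁻¹ - (c / (1 + c * (a ⬝ᵥ (A⁻¹ *ᵥ a)))) • vecMulVec (A⁻¹ *ᵥ a) (A⁻¹ *ᵥ a) := by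
  set χ := a ⬝ᵥ (A⁻¹ *ᵥ a) with hχ
  have hχ0 : 0 ≤ χ := chi_nonneg hA.inv a
  have hden : 0 < 1 + c * χ := by positivity
  set k := c / (1 + c * χ) with hk
  set x' := A⁻¹ *ᵥ a with hx'
  have hAdet : IsUnit A.det := isUnit_iff_ne_zero.mpr (ne_of_gt hA.det_pos)
  apply Matrix.inv_eq_right_inv
  have hAAinv : A * A⁻¹ = 1 := Matrix.mul_nonsing_inv A hAdet
  have hAx' : A *ᵥ x' = a := by
    rw [hx', Matrix.mulVec_mulVec, hAAinv, Matrix.one_mulVec]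
  have e1 : A * vecMulVec x' x' = vecMulVec a x' := by
    rw [mul_vecMulVec', hAx']
  have e2 : vecMulVec a a * A⁻¹ = vecMulVec a x' := by
    rw [vecMulVec_mul', inv_transpose_eq hA]
  have e3 : vecMulVec a a * vecMulVec x' x' = χ • vecMulVec a x' := by
    rw [mul_vecMulVec', mulVec_vecMulVec']
    rw [smul_vecMulVec]
  have hcomb : k • vecMulVec a x' + c • (k • (χ • vecMulVec a x')) = c • vecMulVec a x' := by
    rw [smul_smul, smul_smul, ← add_smul]
    congr 1
    rw [hk]
    field_simp
  rw [Matrix.mul_sub, Matrix.add_mul, Matrix.add_mul, Matrix.mul_smul, Matrix.smul_mul,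
    Matrix.smul_mul, Matrix.mul_smul, hAAinv, e1, e2, e3, hcomb, add_sub_cancel_right]



lemma det_update {A : Matrix (Fin d) (Fin d) ℝ} (hA : A.PosDef) {c : ℝ} (hc : 0 ≤ c)
    (a : Fin d → ℝ) :
    (A + c • vecMulVec a a).det = A.det * (1 + c * (a ⬝ᵥ (A⁻¹ *ᵥ a))) := by
  have hAdet : IsUnit A.det := isUnit_iff_ne_zero.mpr (ne_of_gt hA.det_pos)
  rw [smul_vecMulVec, vecMulVec_eq Unit]
  rw [Matrix.det_add_replicateCol_mul_replicateRow hAdet]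
  congr 1
  rw [Matrix.det_unique]
  simp [Matrix.mul_apply, Matrix.replicateRow_apply, Matrix.replicateCol_apply, mulVec, dotProduct,
    Finset.mul_sum, Finset.sum_mul]
  rw [Finset.sum_comm]
  exact Finset.sum_congr rfl fun i _ => Finset.sum_congr rfl fun j _ => by ring

lemma cs_quad {A : Matrix (Fin d) (Fin d) ℝ} (hA : A.PosDef) (u v : Fin d → ℝ) :
    (u ⬝ᵥ v) ^ 2 ≤ (u ⬝ᵥ (A *ᵥ u)) * (v ⬝ᵥ (A⁻¹ *ᵥ v)) := by
  have hT := posdef_transpose hA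
  have hAdet : IsUnit A.det := isUnit_iff_ne_zero.mpr (ne_of_gt hA.det_pos)
  set z := A⁻¹ *ᵥ v with hz
  have hAz : A *ᵥ z = v := by
    rw [hz, Matrix.mulVec_mulVec, Matrix.mul_nonsing_inv A hAdet, Matrix.one_mulVec]
  have h1 : u ⬝ᵥ v = u ⬝ᵥ (A *ᵥ z) := by rw [hAz]
  have h2 : v ⬝ᵥ (A⁻¹ *ᵥ v) = z ⬝ᵥ (A *ᵥ z) := by
    nth_rewrite 1 [← hAz]
    rw [← hz, dotProduct_comm]
  rw [h1, h2]
  -- CS for the PSD bilinear form B(a,b) = a ⬝ᵥ A *ᵥ b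
  have key : ∀ lam : ℝ, 0 ≤ (z ⬝ᵥ (A *ᵥ z)) * (lam * lam)
      + (2 * (u ⬝ᵥ (A *ᵥ z))) * lam + (u ⬝ᵥ (A *ᵥ u)) := by
    intro lam
    have h0 : 0 ≤ (u + lam • z) ⬝ᵥ (A *ᵥ (u + lam • z)) := chi_nonneg hA _
    have hexp : (u + lam • z) ⬝ᵥ (A *ᵥ (u + lam • z))
        = (z ⬝ᵥ (A *ᵥ z)) * (lam * lam) + (2 * (u ⬝ᵥ (A *ᵥ z))) * lam + (u ⬝ᵥ (A *ᵥ u)) := by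
      rw [Matrix.mulVec_add, Matrix.mulVec_smul, dotProduct_add, add_dotProduct,
        add_dotProduct, dotProduct_smul, smul_dotProduct, smul_dotProduct]
      simp only [dotProduct_smul, smul_eq_mul]
      rw [dot_symm A hT z u]
      ring
    rw [← hexp]; exact h0
  have hd := discrim_le_zero key
  rw [discrim] at hd
  nlinarith [hd]

lemma sum_mulVec' (S : Finset ℕ) (f : ℕ → Matrix (Fin d) (Fin d) ℝ) (u : Fin d → ℝ) :
    (∑ s ∈ S, f s) *ᵥ u = ∑ s ∈ S, f s *ᵥ u := by
  ext i
  simp only [mulVec, dotProduct, Finset.sum_apply, Matrix.sum_apply, Finset.sum_mul]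
  rw [Finset.sum_comm]

lemma dotProduct_sum' (S : Finset ℕ) (f : ℕ → Fin d → ℝ) (u : Fin d → ℝ) :
    u ⬝ᵥ (∑ s ∈ S, f s) = ∑ s ∈ S, u ⬝ᵥ f s := by
  simp only [dotProduct, Finset.sum_apply, Finset.mul_sum]
  rw [Finset.sum_comm]

/-- mistake bound for the (aggressive) second-order
Perceptron/AROW-style algorithm.  The hinge loss is
`ℓ_t(w) = max (1 - y_t ⟨w, x_t⟩) 0`; `M` is the set of mistake steps,
`U` the set of margin-error steps, and `V = M ∪ U = {t : ℓ_t(w_t) > 0}`;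
`m_t = θ_tᵀ A_{t-1}⁻¹ x_t` and `χ_t = x_tᵀ A_{t-1}⁻¹ x_t`. -/
theorem stmt_18 {d T : ℕ} (hT : 1 ≤ T)
    (x : ℕ → Fin d → ℝ) (y : ℕ → ℝ)
    (hy : ∀ t ∈ Icc 1 T, y t = 1 ∨ y t = -1)
    (r : ℝ) (hr : 0 < r)
    (θ : ℕ → Fin d → ℝ) (A Atil : ℕ → Matrix (Fin d) (Fin d) ℝ)
    (w : ℕ → Fin d → ℝ)
    (hθ1 : θ 1 = 0) (hA0 : A 0 = 1)
    (hAtil : ∀ t ∈ Icc 1 T,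
      Atil t = A (t - 1) + (1 / r) • Matrix.vecMulVec (x t) (x t))
    (hw : ∀ t ∈ Icc 1 T, w t = (Atil t)⁻¹ *ᵥ θ t)
    (hupd : ∀ t ∈ Icc 1 T,
      if 0 < 1 - y t * (w t ⬝ᵥ x t) then
        θ (t + 1) = θ t + y t • x t ∧ A t = Atil t
      else
        θ (t + 1) = θ t ∧ A t = A (t - 1)) :
    ∀ u : Fin d → ℝ,
      (((Icc 1 T).filter fun t => y t * (w t ⬝ᵥ x t) ≤ 0).card : ℝ)
        + (((Icc 1 T).filter fun t =>
            0 < y t * (w t ⬝ᵥ x t) ∧ 0 < 1 - y t * (w t ⬝ᵥ x t)).card : ℝ)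
        - ∑ t ∈ Icc 1 T, max (1 - y t * (u ⬝ᵥ x t)) 0 ≤
      Real.sqrt (r * ∑ i, u i ^ 2
          + ∑ t ∈ (Icc 1 T).filter (fun t => 0 < 1 - y t * (w t ⬝ᵥ x t)),
              (u ⬝ᵥ x t) ^ 2)
        * Real.sqrt (max 0 (Real.log (A T).det
            + ∑ t ∈ (Icc 1 T).filter (fun t => 0 < 1 - y t * (w t ⬝ᵥ x t)),
                (θ t ⬝ᵥ ((A (t - 1))⁻¹ *ᵥ x t))
                  * (2 * r * y t - θ t ⬝ᵥ ((A (t - 1))⁻¹ *ᵥ x t))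
                  / (r * (r + x t ⬝ᵥ ((A (t - 1))⁻¹ *ᵥ x t))))) := by
  intro u
  have key : ∀ t, t ≤ T →
      (A t).PosDef ∧
      A t = 1 + ∑ s ∈ (Icc 1 t).filter (fun s => 0 < 1 - y s * (w s ⬝ᵥ x s)),
          (1 / r) • vecMulVec (x s) (x s) ∧
      θ (t + 1) = ∑ s ∈ (Icc 1 t).filter (fun s => 0 < 1 - y s * (w s ⬝ᵥ x s)),
          y s • x s ∧
      θ (t + 1) ⬝ᵥ ((A t)⁻¹ *ᵥ θ (t + 1)) ≤
        r * Real.log (A t).det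
          + ∑ s ∈ (Icc 1 t).filter (fun s => 0 < 1 - y s * (w s ⬝ᵥ x s)),
              (θ s ⬝ᵥ ((A (s - 1))⁻¹ *ᵥ x s))
                * (2 * r * y s - θ s ⬝ᵥ ((A (s - 1))⁻¹ *ᵥ x s))
                / (r + x s ⬝ᵥ ((A (s - 1))⁻¹ *ᵥ x s)) := by
    intro t
    induction t with
    | zero =>
      intro _
      have hIcc0 : Icc 1 0 = (∅ : Finset ℕ) := by simp
      rw [hA0, hθ1, hIcc0]
      refine ⟨Matrix.PosDef.one, by simp, by simp, by simp⟩
    | succ t ih =>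
      intro hle
      obtain ⟨hPD, hAeq, hθeq, hQ⟩ := ih (by omega)
      have ht1 : t + 1 ∈ Icc 1 T := by simp [Finset.mem_Icc]; omega
      have hIcc : Icc 1 (t + 1) = insert (t + 1) (Icc 1 t) := by
        ext s; simp only [Finset.mem_Icc, Finset.mem_insert]; omega
      have hnm : (t + 1) ∉ (Icc 1 t).filter (fun s => 0 < 1 - y s * (w s ⬝ᵥ x s)) := by
        simp [Finset.mem_Icc]
      have hupd' := hupd (t + 1) ht1
      by_cases hV : 0 < 1 - y (t + 1) * (w (t + 1) ⬝ᵥ x (t + 1))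
      · rw [if_pos hV] at hupd'
        obtain ⟨hθn, hAn⟩ := hupd'
        have hAtil' := hAtil (t + 1) ht1
        have hts : t + 1 - 1 = t := by omega
        rw [hts] at hAtil'
        have hAn' : A (t + 1) = A t + (1 / r) • vecMulVec (x (t + 1)) (x (t + 1)) := by
          rw [hAn, hAtil']
        have hPinv : ((A t)⁻¹).PosDef := hPD.inv
        have hχ0 : 0 ≤ x (t + 1) ⬝ᵥ ((A t)⁻¹ *ᵥ x (t + 1)) := chi_nonneg hPinv _
        have hrχ : 0 < r + x (t + 1) ⬝ᵥ ((A t)⁻¹ *ᵥ x (t + 1)) := by linarith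
        have hPDn : (A (t + 1)).PosDef := by
          rw [hAn']; exact posdef_update hPD (by positivity) _
        have hfil : (Icc 1 (t + 1)).filter (fun s => 0 < 1 - y s * (w s ⬝ᵥ x s))
            = insert (t + 1) ((Icc 1 t).filter (fun s => 0 < 1 - y s * (w s ⬝ᵥ x s))) := by
          rw [hIcc, Finset.filter_insert, if_pos hV]
        refine ⟨hPDn, ?_, ?_, ?_⟩
        · rw [hAn', hfil, Finset.sum_insert hnm, hAeq]; abel
        · rw [hθn, hθeq, hfil, Finset.sum_insert hnm]; abel
        · have hc1 : (0:ℝ) < 1 + (1 / r) * (x (t + 1) ⬝ᵥ ((A t)⁻¹ *ᵥ x (t + 1))) := by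
            positivity
          have hSM : (A (t + 1))⁻¹ = (A t)⁻¹
              - (1 / (r + x (t + 1) ⬝ᵥ ((A t)⁻¹ *ᵥ x (t + 1))))
                • vecMulVec ((A t)⁻¹ *ᵥ x (t + 1)) ((A t)⁻¹ *ᵥ x (t + 1)) := by
            rw [hAn', sherman_morrison hPD (by positivity) _]
            congr 2
            rw [div_eq_div_iff (by positivity) (ne_of_gt hrχ)]
            field_simp
          have hPt : ((A t)⁻¹)ᵀ = (A t)⁻¹ := inv_transpose_eq hPD
          have hexp : θ (t + 1 + 1) ⬝ᵥ ((A (t + 1))⁻¹ *ᵥ θ (t + 1 + 1))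
              = θ (t + 1) ⬝ᵥ ((A t)⁻¹ *ᵥ θ (t + 1))
                + (r * (x (t + 1) ⬝ᵥ ((A t)⁻¹ *ᵥ x (t + 1)))
                   + (θ (t + 1) ⬝ᵥ ((A t)⁻¹ *ᵥ x (t + 1)))
                     * (2 * r * y (t + 1) - θ (t + 1) ⬝ᵥ ((A t)⁻¹ *ᵥ x (t + 1))))
                  / (r + x (t + 1) ⬝ᵥ ((A t)⁻¹ *ᵥ x (t + 1))) := by
            rw [hθn, hSM]
            simp only [Matrix.sub_mulVec, Matrix.mulVec_add, Matrix.mulVec_smul,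
              Matrix.smul_mulVec, dotProduct_add, add_dotProduct, dotProduct_sub,
              sub_dotProduct, dotProduct_smul, smul_dotProduct, smul_eq_mul, dot_vecMulVec]
            have e1 : x (t + 1) ⬝ᵥ ((A t)⁻¹ *ᵥ θ (t + 1))
                = θ (t + 1) ⬝ᵥ ((A t)⁻¹ *ᵥ x (t + 1)) := dot_symm _ hPt _ _
            have e2 : ((A t)⁻¹ *ᵥ x (t + 1)) ⬝ᵥ θ (t + 1)
                = θ (t + 1) ⬝ᵥ ((A t)⁻¹ *ᵥ x (t + 1)) := dotProduct_comm _ _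
            have e3 : ((A t)⁻¹ *ᵥ x (t + 1)) ⬝ᵥ x (t + 1)
                = x (t + 1) ⬝ᵥ ((A t)⁻¹ *ᵥ x (t + 1)) := dotProduct_comm _ _
            rw [e1, e2, e3]
            rcases hy (t + 1) ht1 with hy1 | hy1 <;> rw [hy1] <;>
            · generalize θ (t + 1) ⬝ᵥ ((A t)⁻¹ *ᵥ θ (t + 1)) = Q
              generalize hmg : θ (t + 1) ⬝ᵥ ((A t)⁻¹ *ᵥ x (t + 1)) = mv
              generalize hcg : x (t + 1) ⬝ᵥ ((A t)⁻¹ *ᵥ x (t + 1)) = cv at hrχ ⊢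
              field_simp
              ring
          have hdet : (A (t + 1)).det
              = (A t).det * (1 + (1 / r) * (x (t + 1) ⬝ᵥ ((A t)⁻¹ *ᵥ x (t + 1)))) := by
            rw [hAn', det_update hPD (by positivity) _]
          have hlog : r * Real.log (A (t + 1)).det
              = r * Real.log (A t).det
                + r * Real.log (1 + (1 / r) * (x (t + 1) ⬝ᵥ ((A t)⁻¹ *ᵥ x (t + 1)))) := by
            rw [hdet, Real.log_mul (ne_of_gt hPD.det_pos) (ne_of_gt hc1), mul_add]
          have hlog2 : r * (x (t + 1) ⬝ᵥ ((A t)⁻¹ *ᵥ x (t + 1)))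
                / (r + x (t + 1) ⬝ᵥ ((A t)⁻¹ *ᵥ x (t + 1)))
              ≤ r * Real.log (1 + (1 / r) * (x (t + 1) ⬝ᵥ ((A t)⁻¹ *ᵥ x (t + 1)))) := by
            have h := Real.one_sub_inv_le_log_of_pos hc1
            have hinv : (1 + (1 / r) * (x (t + 1) ⬝ᵥ ((A t)⁻¹ *ᵥ x (t + 1))))⁻¹
                = r / (r + x (t + 1) ⬝ᵥ ((A t)⁻¹ *ᵥ x (t + 1))) := by
              rw [show (1 + (1 / r) * (x (t + 1) ⬝ᵥ ((A t)⁻¹ *ᵥ x (t + 1))))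
                  = (r + x (t + 1) ⬝ᵥ ((A t)⁻¹ *ᵥ x (t + 1))) / r by
                field_simp, inv_div]
            rw [hinv] at h
            have h2 := mul_le_mul_of_nonneg_left h hr.le
            have heq : r * (1 - r / (r + x (t + 1) ⬝ᵥ ((A t)⁻¹ *ᵥ x (t + 1))))
                = r * (x (t + 1) ⬝ᵥ ((A t)⁻¹ *ᵥ x (t + 1)))
                  / (r + x (t + 1) ⬝ᵥ ((A t)⁻¹ *ᵥ x (t + 1))) := by
              rw [one_sub_div (ne_of_gt hrχ), add_sub_cancel_left, mul_div_assoc]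
            linarith [h2, heq.ge, heq.le]
          rw [hfil, Finset.sum_insert hnm, hexp, hlog]
          simp only [Nat.add_sub_cancel]
          have hsplit : (r * (x (t + 1) ⬝ᵥ ((A t)⁻¹ *ᵥ x (t + 1)))
                   + (θ (t + 1) ⬝ᵥ ((A t)⁻¹ *ᵥ x (t + 1)))
                     * (2 * r * y (t + 1) - θ (t + 1) ⬝ᵥ ((A t)⁻¹ *ᵥ x (t + 1))))
                  / (r + x (t + 1) ⬝ᵥ ((A t)⁻¹ *ᵥ x (t + 1)))
              = r * (x (t + 1) ⬝ᵥ ((A t)⁻¹ *ᵥ x (t + 1)))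
                  / (r + x (t + 1) ⬝ᵥ ((A t)⁻¹ *ᵥ x (t + 1)))
                + (θ (t + 1) ⬝ᵥ ((A t)⁻¹ *ᵥ x (t + 1)))
                     * (2 * r * y (t + 1) - θ (t + 1) ⬝ᵥ ((A t)⁻¹ *ᵥ x (t + 1)))
                  / (r + x (t + 1) ⬝ᵥ ((A t)⁻¹ *ᵥ x (t + 1))) := by
            ring
          linarith [hQ]
      · rw [if_neg hV] at hupd'
        obtain ⟨hθn, hAn⟩ := hupd'
        have hAn' : A (t + 1) = A t := by rw [hAn]; norm_num
        have hfil : (Icc 1 (t + 1)).filter (fun s => 0 < 1 - y s * (w s ⬝ᵥ x s))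
            = (Icc 1 t).filter (fun s => 0 < 1 - y s * (w s ⬝ᵥ x s)) := by
          rw [hIcc, Finset.filter_insert, if_neg hV]
        rw [hAn', hθn, hfil]
        exact ⟨hPD, hAeq, hθeq, hQ⟩
  obtain ⟨hPDT, hAT, hθT, hQT⟩ := key T le_rfl
  -- Step A: cards
  have hMcard : ((Icc 1 T).filter fun t => y t * (w t ⬝ᵥ x t) ≤ 0)
      = ((Icc 1 T).filter (fun t => 0 < 1 - y t * (w t ⬝ᵥ x t))).filter
          (fun t => y t * (w t ⬝ᵥ x t) ≤ 0) := by
    rw [Finset.filter_filter]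
    apply Finset.filter_congr
    intro t _
    constructor
    · intro h; exact ⟨by linarith, h⟩
    · intro h; exact h.2
  have hUcard : ((Icc 1 T).filter fun t =>
        0 < y t * (w t ⬝ᵥ x t) ∧ 0 < 1 - y t * (w t ⬝ᵥ x t))
      = ((Icc 1 T).filter (fun t => 0 < 1 - y t * (w t ⬝ᵥ x t))).filter
          (fun t => ¬ (y t * (w t ⬝ᵥ x t) ≤ 0)) := by
    rw [Finset.filter_filter]
    apply Finset.filter_congr
    intro t _
    constructor
    · intro h; exact ⟨h.2, not_le.mpr h.1⟩
    · intro h; exact ⟨not_le.mp h.2, h.1⟩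
  have hcards : (((Icc 1 T).filter fun t => y t * (w t ⬝ᵥ x t) ≤ 0).card : ℝ)
      + (((Icc 1 T).filter fun t =>
          0 < y t * (w t ⬝ᵥ x t) ∧ 0 < 1 - y t * (w t ⬝ᵥ x t)).card : ℝ)
      = (((Icc 1 T).filter (fun t => 0 < 1 - y t * (w t ⬝ᵥ x t))).card : ℝ) := by
    rw [hMcard, hUcard]
    rw [← Nat.cast_add]
    norm_cast
    exact Finset.card_filter_add_card_filter_not _
  -- Step B
  have hcount : ((((Icc 1 T).filter (fun t => 0 < 1 - y t * (w t ⬝ᵥ x t))).card : ℝ))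
      - ∑ t ∈ Icc 1 T, max (1 - y t * (u ⬝ᵥ x t)) 0 ≤ u ⬝ᵥ θ (T + 1) := by
    have h1 : ∀ t ∈ (Icc 1 T).filter (fun t => 0 < 1 - y t * (w t ⬝ᵥ x t)),
        (1 : ℝ) ≤ max (1 - y t * (u ⬝ᵥ x t)) 0 + y t * (u ⬝ᵥ x t) := by
      intro t _
      have := le_max_left (1 - y t * (u ⬝ᵥ x t)) 0
      linarith
    have h2 : ((((Icc 1 T).filter (fun t => 0 < 1 - y t * (w t ⬝ᵥ x t))).card : ℝ))
        ≤ ∑ t ∈ (Icc 1 T).filter (fun t => 0 < 1 - y t * (w t ⬝ᵥ x t)),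
            (max (1 - y t * (u ⬝ᵥ x t)) 0 + y t * (u ⬝ᵥ x t)) := by
      calc ((((Icc 1 T).filter (fun t => 0 < 1 - y t * (w t ⬝ᵥ x t))).card : ℝ))
          = ∑ _t ∈ (Icc 1 T).filter (fun t => 0 < 1 - y t * (w t ⬝ᵥ x t)), (1:ℝ) := by simp
        _ ≤ _ := Finset.sum_le_sum h1
    rw [Finset.sum_add_distrib] at h2
    have h3 : ∑ t ∈ (Icc 1 T).filter (fun t => 0 < 1 - y t * (w t ⬝ᵥ x t)),
          max (1 - y t * (u ⬝ᵥ x t)) 0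
        ≤ ∑ t ∈ Icc 1 T, max (1 - y t * (u ⬝ᵥ x t)) 0 :=
      Finset.sum_le_sum_of_subset_of_nonneg (Finset.filter_subset _ _)
        (fun t _ _ => le_max_right _ _)
    have h4 : u ⬝ᵥ θ (T + 1)
        = ∑ t ∈ (Icc 1 T).filter (fun t => 0 < 1 - y t * (w t ⬝ᵥ x t)),
            y t * (u ⬝ᵥ x t) := by
      rw [hθT, dotProduct_sum']
      exact Finset.sum_congr rfl fun s _ => by rw [dotProduct_smul, smul_eq_mul]
    linarith
  -- Step D
  have hQu : u ⬝ᵥ (A T *ᵥ u) = (∑ i, u i ^ 2)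
      + ∑ t ∈ (Icc 1 T).filter (fun t => 0 < 1 - y t * (w t ⬝ᵥ x t)),
          (1 / r) * (u ⬝ᵥ x t) ^ 2 := by
    nth_rewrite 1 [hAT]
    rw [Matrix.add_mulVec, Matrix.one_mulVec, dotProduct_add, sum_mulVec', dotProduct_sum']
    congr 1
    · simp [dotProduct, sq]
    · refine Finset.sum_congr rfl fun s _ => ?_
      rw [Matrix.smul_mulVec, dotProduct_smul, smul_eq_mul, dot_vecMulVec,
        dotProduct_comm (x s) u]
      ring
  have hru : r * (∑ i, u i ^ 2)
      + ∑ t ∈ (Icc 1 T).filter (fun t => 0 < 1 - y t * (w t ⬝ᵥ x t)), (u ⬝ᵥ x t) ^ 2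
      = r * (u ⬝ᵥ (A T *ᵥ u)) := by
    have h5 : ∑ t ∈ (Icc 1 T).filter (fun t => 0 < 1 - y t * (w t ⬝ᵥ x t)), (u ⬝ᵥ x t) ^ 2
        = ∑ t ∈ (Icc 1 T).filter (fun t => 0 < 1 - y t * (w t ⬝ᵥ x t)),
            r * ((1 / r) * (u ⬝ᵥ x t) ^ 2) :=
      Finset.sum_congr rfl fun s _ => by field_simp
    rw [hQu, mul_add, h5]
    simp only [Finset.mul_sum]
  -- Step E
  have hsum_eq : r * (Real.log (A T).det
        + ∑ t ∈ (Icc 1 T).filter (fun t => 0 < 1 - y t * (w t ⬝ᵥ x t)),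
            (θ t ⬝ᵥ ((A (t - 1))⁻¹ *ᵥ x t)) * (2 * r * y t - θ t ⬝ᵥ ((A (t - 1))⁻¹ *ᵥ x t))
              / (r * (r + x t ⬝ᵥ ((A (t - 1))⁻¹ *ᵥ x t))))
      = r * Real.log (A T).det
        + ∑ t ∈ (Icc 1 T).filter (fun t => 0 < 1 - y t * (w t ⬝ᵥ x t)),
            (θ t ⬝ᵥ ((A (t - 1))⁻¹ *ᵥ x t)) * (2 * r * y t - θ t ⬝ᵥ ((A (t - 1))⁻¹ *ᵥ x t))
              / (r + x t ⬝ᵥ ((A (t - 1))⁻¹ *ᵥ x t)) := by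
    rw [mul_add, Finset.mul_sum]
    congr 1
    refine Finset.sum_congr rfl fun s hs => ?_
    have hsT : s - 1 ≤ T := by
      simp only [Finset.mem_filter, Finset.mem_Icc] at hs
      omega
    have hPDs := (key (s - 1) hsT).1
    have hχs : 0 ≤ x s ⬝ᵥ ((A (s - 1))⁻¹ *ᵥ x s) := chi_nonneg hPDs.inv _
    generalize θ s ⬝ᵥ ((A (s - 1))⁻¹ *ᵥ x s) = a
    generalize hcs : x s ⬝ᵥ ((A (s - 1))⁻¹ *ᵥ x s) = b at hχs
    have hb : (0:ℝ) < r + b := by linarith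
    field_simp
  have hθQ0 : 0 ≤ θ (T + 1) ⬝ᵥ ((A T)⁻¹ *ᵥ θ (T + 1)) := chi_nonneg hPDT.inv _
  have hQu0 : 0 ≤ u ⬝ᵥ (A T *ᵥ u) := chi_nonneg hPDT u
  -- the log det expression
  set E := Real.log (A T).det
      + ∑ t ∈ (Icc 1 T).filter (fun t => 0 < 1 - y t * (w t ⬝ᵥ x t)),
          (θ t ⬝ᵥ ((A (t - 1))⁻¹ *ᵥ x t)) * (2 * r * y t - θ t ⬝ᵥ ((A (t - 1))⁻¹ *ᵥ x t))
            / (r * (r + x t ⬝ᵥ ((A (t - 1))⁻¹ *ᵥ x t))) with hEdef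
  have hθQle : θ (T + 1) ⬝ᵥ ((A T)⁻¹ *ᵥ θ (T + 1)) ≤ r * max 0 E := by
    have h1 : θ (T + 1) ⬝ᵥ ((A T)⁻¹ *ᵥ θ (T + 1)) ≤ r * E := by
      rw [hEdef, hsum_eq]; exact hQT
    have h2 : r * E ≤ r * max 0 E :=
      mul_le_mul_of_nonneg_left (le_max_right _ _) hr.le
    exact h1.trans h2
  -- Cauchy–Schwarz
  have hCS : u ⬝ᵥ θ (T + 1)
      ≤ Real.sqrt (u ⬝ᵥ (A T *ᵥ u)) * Real.sqrt (θ (T + 1) ⬝ᵥ ((A T)⁻¹ *ᵥ θ (T + 1))) := by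
    have h := cs_quad hPDT u (θ (T + 1))
    have h1 : u ⬝ᵥ θ (T + 1) ≤ |u ⬝ᵥ θ (T + 1)| := le_abs_self _
    have h2 : |u ⬝ᵥ θ (T + 1)| = Real.sqrt ((u ⬝ᵥ θ (T + 1)) ^ 2) :=
      (Real.sqrt_sq_eq_abs _).symm
    have h3 := Real.sqrt_le_sqrt h
    rw [Real.sqrt_mul hQu0] at h3
    linarith
  have hmax0 : (0:ℝ) ≤ max 0 E := le_max_left _ _
  have hchain : Real.sqrt (u ⬝ᵥ (A T *ᵥ u))
        * Real.sqrt (θ (T + 1) ⬝ᵥ ((A T)⁻¹ *ᵥ θ (T + 1)))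
      ≤ Real.sqrt (r * (u ⬝ᵥ (A T *ᵥ u))) * Real.sqrt (max 0 E) := by
    have h1 : Real.sqrt (θ (T + 1) ⬝ᵥ ((A T)⁻¹ *ᵥ θ (T + 1)))
        ≤ Real.sqrt (r * max 0 E) := Real.sqrt_le_sqrt hθQle
    have h2 : Real.sqrt (u ⬝ᵥ (A T *ᵥ u)) * Real.sqrt (θ (T + 1) ⬝ᵥ ((A T)⁻¹ *ᵥ θ (T + 1)))
        ≤ Real.sqrt (u ⬝ᵥ (A T *ᵥ u)) * Real.sqrt (r * max 0 E) :=
      mul_le_mul_of_nonneg_left h1 (Real.sqrt_nonneg _)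
    have h3 : Real.sqrt (u ⬝ᵥ (A T *ᵥ u)) * Real.sqrt (r * max 0 E)
        = Real.sqrt (r * (u ⬝ᵥ (A T *ᵥ u))) * Real.sqrt (max 0 E) := by
      rw [← Real.sqrt_mul hQu0, ← Real.sqrt_mul (by positivity : (0:ℝ) ≤ r * (u ⬝ᵥ (A T *ᵥ u)))]
      congr 1
      ring
    linarith
  calc (((Icc 1 T).filter fun t => y t * (w t ⬝ᵥ x t) ≤ 0).card : ℝ)
        + (((Icc 1 T).filter fun t =>
            0 < y t * (w t ⬝ᵥ x t) ∧ 0 < 1 - y t * (w t ⬝ᵥ x t)).card : ℝ)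
        - ∑ t ∈ Icc 1 T, max (1 - y t * (u ⬝ᵥ x t)) 0
      = (((Icc 1 T).filter (fun t => 0 < 1 - y t * (w t ⬝ᵥ x t))).card : ℝ)
        - ∑ t ∈ Icc 1 T, max (1 - y t * (u ⬝ᵥ x t)) 0 := by rw [hcards]
    _ ≤ u ⬝ᵥ θ (T + 1) := hcount
    _ ≤ Real.sqrt (u ⬝ᵥ (A T *ᵥ u))
          * Real.sqrt (θ (T + 1) ⬝ᵥ ((A T)⁻¹ *ᵥ θ (T + 1))) := hCS
    _ ≤ Real.sqrt (r * (u ⬝ᵥ (A T *ᵥ u))) * Real.sqrt (max 0 E) := hchain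
    _ = Real.sqrt (r * ∑ i, u i ^ 2
          + ∑ t ∈ (Icc 1 T).filter (fun t => 0 < 1 - y t * (w t ⬝ᵥ x t)),
              (u ⬝ᵥ x t) ^ 2) * Real.sqrt (max 0 E) := by rw [hru]
end
end
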